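/- arXiv:1909.01927 — 6 statements merged into one kernel-verified Lean document; each statement's English description precedes it below -/
import Mathlib

section
/- Fix integers N ≥ 1, p ≥ 1, q ≥ 1 and distinct points ζ₁, ζ₂ ∈ (-π, π]. Define u ∈ ℂ^{N+1} by u_k = (ik)^{p-1} e^{ikζ₁} and v ∈ ℂ^{N+1} by v_k = (ik)^{q-1} e^{ikζ₂}, for k = 0,…,N. Then |⟨u, v⟩| ≤ (π / Δ(ζ₁, ζ₂)) · N^{p+q-2}, where Δ is the wrap-around distance. -/
open Complex Real

lemma abel_id (f : ℕ → ℂ) (z : ℂ) (n : ℕ) :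
    (1 - z) * ∑ k ∈ Finset.range (n+1), f k * z^k
      = f 0 + (∑ k ∈ Finset.range n, (f (k+1) - f k) * z^(k+1)) - f n * z^(n+1) := by
  induction n with
  | zero => simp [Finset.sum_range_one]; ring
  | succ n ih =>
      rw [Finset.sum_range_succ, Finset.sum_range_succ (fun k => (f (k+1) - f k) * z^(k+1))]
      linear_combination ih

lemma key_norm (m n : ℕ) (z : ℂ) (hz : ‖z‖ = 1) :
    ‖(1 - z) * ∑ k ∈ Finset.range (n+1), ((k:ℕ):ℂ)^m * z^k‖ ≤ 2 * (n:ℝ)^m := by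
  rw [abel_id (fun k => ((k:ℕ):ℂ)^m) z n]
  have hnorm : ∀ k : ℕ, ‖(((k+1:ℕ):ℂ)^m - ((k:ℕ):ℂ)^m) * z^(k+1)‖
      = ((k+1:ℕ):ℝ)^m - ((k:ℕ):ℝ)^m := by
    intro k
    have h1 : (((k+1:ℕ):ℂ)^m - ((k:ℕ):ℂ)^m) = ((((k+1:ℕ):ℝ)^m - ((k:ℕ):ℝ)^m : ℝ) : ℂ) := by
      push_cast; ring
    rw [norm_mul, norm_pow, hz, one_pow, mul_one, h1, Complex.norm_real,
      Real.norm_of_nonneg]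
    have : ((k:ℕ):ℝ) ≤ ((k+1:ℕ):ℝ) := by push_cast; linarith
    have := pow_le_pow_left₀ (by positivity) this m
    linarith
  have hsum : ‖∑ k ∈ Finset.range n, (((k+1:ℕ):ℂ)^m - ((k:ℕ):ℂ)^m) * z^(k+1)‖
      ≤ (n:ℝ)^m - ((0:ℕ):ℝ)^m := by
    calc _ ≤ ∑ k ∈ Finset.range n, ‖(((k+1:ℕ):ℂ)^m - ((k:ℕ):ℂ)^m) * z^(k+1)‖ :=
          norm_sum_le _ _
      _ = ∑ k ∈ Finset.range n, (((k+1:ℕ):ℝ)^m - ((k:ℕ):ℝ)^m) :=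
          Finset.sum_congr rfl fun k _ => hnorm k
      _ = (n:ℝ)^m - ((0:ℕ):ℝ)^m := Finset.sum_range_sub (fun k => ((k:ℕ):ℝ)^m) n
  have h0 : ‖((0:ℕ):ℂ)^m‖ = ((0:ℕ):ℝ)^m := by
    rw [show ((0:ℕ):ℂ) = (((0:ℕ):ℝ):ℂ) by push_cast; ring, ← Complex.ofReal_pow,
      Complex.norm_real, Real.norm_of_nonneg (by positivity)]
  have hn : ‖((n:ℕ):ℂ)^m * z^(n+1)‖ = ((n:ℕ):ℝ)^m := by
    rw [norm_mul, norm_pow, norm_pow, hz, one_pow, mul_one, Complex.norm_natCast]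
  calc ‖_ + _ - _‖ ≤ ‖((0:ℕ):ℂ)^m + ∑ k ∈ Finset.range n, (((k+1:ℕ):ℂ)^m - ((k:ℕ):ℂ)^m) * z^(k+1)‖
        + ‖((n:ℕ):ℂ)^m * z^(n+1)‖ := norm_sub_le _ _
    _ ≤ ‖((0:ℕ):ℂ)^m‖ + ‖∑ k ∈ Finset.range n, (((k+1:ℕ):ℂ)^m - ((k:ℕ):ℂ)^m) * z^(k+1)‖
        + ‖((n:ℕ):ℂ)^m * z^(n+1)‖ := by gcongr; exact norm_add_le _ _
    _ ≤ ((0:ℕ):ℝ)^m + ((n:ℝ)^m - ((0:ℕ):ℝ)^m) + (n:ℝ)^m := by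
        rw [h0, hn]; gcongr
    _ = 2 * (n:ℝ)^m := by push_cast; ring

/-- The wrap-around distance `Δ(x,y) = |Arg e^{i(x-y)}| ∈ [0, π]`. -/
noncomputable def wrapDist (x y : ℝ) : ℝ :=
  |Complex.arg (Complex.exp (Complex.I * (x - y)))|

theorem limit_vectors_inner_bound (N p q : ℕ) (hN : 1 ≤ N) (hp : 1 ≤ p) (hq : 1 ≤ q)
    (ζ₁ ζ₂ : ℝ) (hζ₁ : ζ₁ ∈ Set.Ioc (-Real.pi) Real.pi)
    (hζ₂ : ζ₂ ∈ Set.Ioc (-Real.pi) Real.pi) (hne : ζ₁ ≠ ζ₂)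
    (u v : EuclideanSpace ℂ (Fin (N + 1)))
    (hu : ∀ k : Fin (N + 1),
      u k = (Complex.I * (k : ℕ)) ^ (p - 1) * Complex.exp (Complex.I * (k : ℕ) * ζ₁))
    (hv : ∀ k : Fin (N + 1),
      v k = (Complex.I * (k : ℕ)) ^ (q - 1) * Complex.exp (Complex.I * (k : ℕ) * ζ₂)) :
    ‖(inner ℂ u v : ℂ)‖ ≤ Real.pi / wrapDist ζ₁ ζ₂ * (N : ℝ) ^ (p + q - 2) := by
  obtain ⟨ha1, ha2⟩ := hζ₁
  obtain ⟨hb1, hb2⟩ := hζ₂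
  set m := p + q - 2 with hm
  set w : ℂ := Complex.exp (Complex.I * ((ζ₁:ℂ) - ζ₂)) with hw
  set z : ℂ := Complex.exp (Complex.I * ((ζ₂:ℂ) - ζ₁)) with hz
  set c : ℂ := (-Complex.I)^(p-1) * Complex.I^(q-1) with hc
  have hπ := Real.pi_pos
  have hw1 : ‖w‖ = 1 := by simp [hw, Complex.norm_exp]
  have hz1 : ‖z‖ = 1 := by simp [hz, Complex.norm_exp]
  -- w ≠ 1
  have hwne : w ≠ 1 := by
    intro h
    rw [hw, Complex.exp_eq_one_iff] at h
    obtain ⟨n, hn⟩ := h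
    have h2 : ((ζ₁ - ζ₂ : ℝ) : ℂ) = (n : ℂ) * (2 * (π:ℂ)) := by
      apply mul_left_cancel₀ Complex.I_ne_zero
      push_cast
      linear_combination hn
    have h3 : ζ₁ - ζ₂ = n * (2 * π) := by exact_mod_cast h2
    have hn0 : n ≠ 0 := by
      intro h0; rw [h0] at h3; simp at h3; exact hne (by linarith)
    have h4 : (1:ℝ) ≤ |(n:ℝ)| := by
      have : (1:ℤ) ≤ |n| := Int.one_le_abs hn0
      calc (1:ℝ) = ((1:ℤ):ℝ) := by norm_num
        _ ≤ ((|n|:ℤ):ℝ) := by exact_mod_cast this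
        _ = |(n:ℝ)| := by push_cast; ring
    have h5 : |ζ₁ - ζ₂| < 2 * π := by rw [abs_lt]; constructor <;> linarith
    rw [h3, abs_mul, abs_of_pos (by positivity : (0:ℝ) < 2*π)] at h5
    nlinarith
  have harg : w.arg ≠ 0 := by
    intro h
    apply hwne
    obtain ⟨hre, him⟩ := Complex.arg_eq_zero_iff.mp h
    have habs : ‖w‖ = 1 := by exact hw1
    have hsq := Complex.sq_norm w
    rw [habs] at hsq
    simp [Complex.normSq_apply, him] at hsq
    have : w.re = 1 := by nlinarith
    exact Complex.ext (by simp [this]) (by simp [him])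
  have hD : 0 < wrapDist ζ₁ ζ₂ := by rw [wrapDist]; exact abs_pos.2 harg
  have hchord : 2 / π * wrapDist ζ₁ ζ₂ ≤ ‖1 - w‖ := by
    have h1 := Complex.mul_angle_le_norm_sub (x := 1) (y := w) norm_one hw1
    rwa [Complex.angle_one_left (Complex.exp_ne_zero _),
      show |w.arg| = wrapDist ζ₁ ζ₂ by rw [wrapDist]] at h1
  -- ‖1 - z‖ = ‖1 - w‖
  have hnormz : ‖1 - z‖ = ‖1 - w‖ := by
    have hzw : (1:ℂ) - z = (starRingEnd ℂ) (1 - w) := by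
      rw [map_sub, map_one]
      congr 1
      rw [hz, hw, ← Complex.exp_conj]
      congr 1
      simp only [map_mul, map_sub, Complex.conj_I, Complex.conj_ofReal]
      ring
    rw [hzw, RCLike.norm_conj]
  -- the inner product as c * S
  open Fin.NatCast in
  have key : ∀ k ∈ Finset.range (N+1),
      (starRingEnd ℂ) (u k) * v k = c * (((k:ℕ):ℂ)^m * z^k) := by
    intro k hkmem
    have hkv : (((k : ℕ) : Fin (N+1)) : ℕ) = k := Fin.val_cast_of_lt (Finset.mem_range.mp hkmem)
    rw [hu, hv, hkv]
    have h1 : (starRingEnd ℂ) ((Complex.I * (k:ℂ))^(p-1) * Complex.exp (Complex.I * (k:ℂ) * ζ₁))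
        = (-Complex.I * (k:ℂ))^(p-1) * Complex.exp (-(Complex.I * (k:ℂ) * ζ₁)) := by
      rw [map_mul, map_pow, map_mul, Complex.conj_I, Complex.conj_natCast, ← Complex.exp_conj]
      congr 1
      simp only [map_mul, Complex.conj_I, Complex.conj_ofReal, Complex.conj_natCast]
      ring
    rw [h1]
    have h2 : Complex.exp (-(Complex.I * (k:ℂ) * ζ₁)) * Complex.exp (Complex.I * (k:ℂ) * ζ₂)
        = z ^ k := by
      rw [hz, ← Complex.exp_nat_mul, ← Complex.exp_add]; congr 1; ring
    have h3 : (-Complex.I * (k:ℂ))^(p-1) * (Complex.I * (k:ℂ))^(q-1) = c * ((k:ℕ):ℂ)^m := by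
      rw [mul_pow, mul_pow, hc, show m = (p-1)+(q-1) by omega, pow_add]
      push_cast; ring
    calc (-Complex.I * (k:ℂ))^(p-1) * Complex.exp (-(Complex.I * (k:ℂ) * ζ₁))
          * ((Complex.I * (k:ℂ))^(q-1) * Complex.exp (Complex.I * (k:ℂ) * ζ₂))
        = ((-Complex.I * (k:ℂ))^(p-1) * (Complex.I * (k:ℂ))^(q-1))
          * (Complex.exp (-(Complex.I * (k:ℂ) * ζ₁)) * Complex.exp (Complex.I * (k:ℂ) * ζ₂)) := by
          ring
      _ = c * ((k:ℕ):ℂ)^m * z^k := by rw [h2, h3]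
      _ = c * (((k:ℕ):ℂ)^m * z^k) := by ring
  open Fin.NatCast in
  have hinner : (inner ℂ u v : ℂ) = c * ∑ k ∈ Finset.range (N+1), ((k:ℕ):ℂ)^m * z^k := by
    have hi : (inner ℂ u v : ℂ) = ∑ k ∈ Finset.range (N+1), (starRingEnd ℂ) (u k) * v k := by
      rw [← Fin.sum_univ_eq_sum_range (fun k => (starRingEnd ℂ) (u k) * v k) (N+1)]
      simp only [PiLp.inner_apply, RCLike.inner_apply]
      congr 1; ext x; rw [Fin.cast_val_eq_self, mul_comm]
    rw [hi, Finset.sum_congr rfl key, ← Finset.mul_sum]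
  have hc1 : ‖c‖ = 1 := by
    rw [hc, norm_mul, norm_pow, norm_pow]
    simp
  -- combine
  set S : ℂ := ∑ k ∈ Finset.range (N+1), ((k:ℕ):ℂ)^m * z^k with hS
  have hkey := key_norm m N z hz1
  rw [← hS] at hkey
  have hAB : ‖1 - z‖ * ‖S‖ ≤ 2 * (N:ℝ)^m := by rw [← norm_mul]; exact hkey
  have hBpos : 0 < ‖1 - z‖ := by
    rw [hnormz]; exact lt_of_lt_of_le (by positivity) hchord
  rw [hinner, norm_mul, hc1, one_mul]
  have hA : ‖S‖ ≤ 2 * (N:ℝ)^m / ‖1 - z‖ := (le_div_iff₀ hBpos).2 (by linarith)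
  have h6 : 2 * (N:ℝ)^m / ‖1 - z‖ ≤ 2 * (N:ℝ)^m / (2 / π * wrapDist ζ₁ ζ₂) := by
    apply div_le_div_of_nonneg_left (by positivity) (by positivity)
    rw [hnormz]; exact hchord
  have h7 : 2 * (N:ℝ)^m / (2 / π * wrapDist ζ₁ ζ₂) = π / wrapDist ζ₁ ζ₂ * (N:ℝ)^m := by
    field_simp
  linarith
end

section
/- Let x₁,…,x_s be points in an interval of length at most h, N ≥ s - 1, N ≥ 1. For j = 1,…,s let w_j ∈ ℂ^{N+1} have entries (w_j)_k = (j-1)![x₁,…,x_j]e^{ikx} (divided difference in x), and let u_j have entries (u_j)_k = (ik)^{j-1} e^{ikx₁}, for k = 0,…,N. Then ‖ u_j/‖u_j‖ - w_j/‖w_j‖ ‖ ≤ 2√2 · N h. -/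
open Complex Finset Polynomial
open scoped ContDiff


lemma hasDerivAt_expI (c : ℝ) (x : ℝ) :
    HasDerivAt (fun t : ℝ => Complex.exp (Complex.I * c * t))
      (Complex.I * c * Complex.exp (Complex.I * c * x)) x := by
  have h1 : HasDerivAt (fun z : ℂ => Complex.exp (Complex.I * c * z))
      (Complex.I * c * Complex.exp (Complex.I * c * x)) (x : ℂ) := by
    have := (Complex.hasDerivAt_exp (Complex.I * c * x)).comp (x : ℂ)
        ((hasDerivAt_id (x : ℂ)).const_mul (Complex.I * c))
    simpa [Function.comp_def, mul_comm] using this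
  exact h1.comp_ofReal

lemma contDiff_expI (c : ℝ) : ContDiff ℝ ∞ (fun t : ℝ => Complex.exp (Complex.I * c * t)) := by
  exact Complex.contDiff_exp.comp (contDiff_const.mul Complex.ofRealCLM.contDiff)

lemma deriv_expI (c : ℝ) :
    deriv (fun t : ℝ => Complex.exp (Complex.I * c * t))
      = fun t : ℝ => Complex.I * c * Complex.exp (Complex.I * c * t) :=
  funext fun x => (hasDerivAt_expI c x).deriv

lemma iteratedDeriv_expI (n : ℕ) (c : ℝ) :
    iteratedDeriv n (fun t : ℝ => Complex.exp (Complex.I * c * t))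
      = fun t : ℝ => (Complex.I * c) ^ n * Complex.exp (Complex.I * c * t) := by
  induction n with
  | zero => simp
  | succ n ih =>
    rw [iteratedDeriv_succ, ih]
    funext x
    have : HasDerivAt (fun t : ℝ => (Complex.I * c) ^ n * Complex.exp (Complex.I * c * t))
        ((Complex.I * c) ^ n * (Complex.I * c * Complex.exp (Complex.I * c * x))) x :=
      (hasDerivAt_expI c x).const_mul _
    rw [this.deriv]; ring

lemma iteratedDeriv_re (n : ℕ) {f : ℝ → ℂ} (hf : ContDiff ℝ ∞ f) (x : ℝ) :
    iteratedDeriv n (fun t => (f t).re) x = (iteratedDeriv n f x).re := by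
  have h := Complex.reCLM.iteratedFDeriv_comp_left (f := f) (hf.contDiffAt (x := x)) (i := n) (by exact_mod_cast le_top)
  rw [iteratedDeriv_eq_iteratedFDeriv, iteratedDeriv_eq_iteratedFDeriv]
  have : (fun t => (f t).re) = (Complex.reCLM ∘ f) := rfl
  rw [this, h]
  rfl

lemma iteratedDeriv_im (n : ℕ) {f : ℝ → ℂ} (hf : ContDiff ℝ ∞ f) (x : ℝ) :
    iteratedDeriv n (fun t => (f t).im) x = (iteratedDeriv n f x).im := by
  have h := Complex.imCLM.iteratedFDeriv_comp_left (f := f) (hf.contDiffAt (x := x)) (i := n) (by exact_mod_cast le_top)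
  rw [iteratedDeriv_eq_iteratedFDeriv, iteratedDeriv_eq_iteratedFDeriv]
  have : (fun t => (f t).im) = (Complex.imCLM ∘ f) := rfl
  rw [this, h]
  rfl


lemma iterated_rolle (n : ℕ) (g : ℝ → ℝ) (hg : ContDiff ℝ ∞ g)
    (t : Fin (n + 1) → ℝ) (ht : StrictMono t) (hz : ∀ i, g (t i) = 0) :
    ∃ ξ ∈ Set.Icc (t 0) (t (Fin.last n)), iteratedDeriv n g ξ = 0 := by
  induction n generalizing g with
  | zero => exact ⟨t 0, ⟨le_rfl, le_rfl⟩, by simpa using hz 0⟩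
  | succ n ih =>
    have hc : ∀ i : Fin (n + 1), ∃ c ∈ Set.Ioo (t i.castSucc) (t i.succ), deriv g c = 0 := by
      intro i
      exact exists_deriv_eq_zero (ht (Fin.castSucc_lt_succ : i.castSucc < i.succ)) hg.continuous.continuousOn
        (by rw [hz, hz])
    choose c hc1 hc2 using hc
    have hcm : StrictMono c := by
      intro a b hab
      calc c a < t a.succ := (hc1 a).2
        _ ≤ t b.castSucc := ht.monotone (by rw [Fin.le_def]; simp; omega)
        _ < c b := (hc1 b).1
    obtain ⟨ξ, hξ, hξ0⟩ := ih (deriv g) (contDiff_infty_iff_deriv.mp hg).2 c hcm hc2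
    refine ⟨ξ, ⟨?_, ?_⟩, by rwa [iteratedDeriv_succ']⟩
    · refine le_trans ?_ hξ.1
      have : t 0 ≤ t ((0 : Fin (n+1)).castSucc) := le_of_eq (by norm_num)
      exact this.trans (hc1 0).1.le
    · refine hξ.2.trans ?_
      have : c (Fin.last n) ≤ t (Fin.last n).succ := (hc1 _).2.le
      exact this.trans (le_of_eq (by congr 1))


lemma contDiff_polyeval (p : ℝ[X]) : ContDiff ℝ ∞ fun x : ℝ => p.eval x := by
  induction p using Polynomial.induction_on' with
  | add p q hp hq => simpa [Polynomial.eval_add] using hp.add hq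
  | monomial n a =>
      simpa [Polynomial.eval_monomial] using (contDiff_const.mul (contDiff_id.pow n))

lemma my_iteratedDeriv_sub (n : ℕ) {f g : ℝ → ℝ} (hf : ContDiff ℝ ∞ f) (hg : ContDiff ℝ ∞ g) :
    iteratedDeriv n (fun x => f x - g x) = fun x => iteratedDeriv n f x - iteratedDeriv n g x := by
  induction n generalizing f g with
  | zero => simp
  | succ n ih =>
    rw [iteratedDeriv_succ', iteratedDeriv_succ', iteratedDeriv_succ']
    have hd : deriv (fun x => f x - g x) = fun x => deriv f x - deriv g x := by
      funext x
      exact deriv_sub (hf.differentiable (by norm_num) x) (hg.differentiable (by norm_num) x)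
    rw [hd]
    exact ih (contDiff_infty_iff_deriv.mp hf).2 (contDiff_infty_iff_deriv.mp hg).2

lemma iteratedDeriv_polyeval (n : ℕ) (p : ℝ[X]) :
    iteratedDeriv n (fun x : ℝ => p.eval x) = fun x => (derivative^[n] p).eval x := by
  induction n generalizing p with
  | zero => simp
  | succ n ih =>
    rw [iteratedDeriv_succ']
    have : deriv (fun x : ℝ => p.eval x) = fun x => (derivative p).eval x := by
      funext x; exact Polynomial.deriv p
    rw [this, ih]
    funext x
    rw [← Function.iterate_succ_apply, Function.iterate_succ_apply']

lemma lagrange_coeff_top (n : ℕ) (t : Fin (n + 1) → ℝ) (f : Fin (n + 1) → ℝ) :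
    (Lagrange.interpolate univ t f).coeff n
      = ∑ m : Fin (n + 1), f m / ∏ l ∈ univ.erase m, (t m - t l) := by
  rw [Lagrange.interpolate_apply, Polynomial.finset_sum_coeff]
  refine Finset.sum_congr rfl fun m _ => ?_
  have hbasis : Lagrange.basis univ t m
      = C (∏ l ∈ univ.erase m, (t m - t l)⁻¹) * Lagrange.nodal (univ.erase m) t := by
    unfold Lagrange.basis Lagrange.basisDivisor
    rw [Finset.prod_mul_distrib, Lagrange.nodal_eq, map_prod]
  have hcard : #(univ.erase m) = n := by
    rw [Finset.card_erase_of_mem (mem_univ m), Finset.card_univ, Fintype.card_fin]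
    rfl
  have hcoeff : (Lagrange.nodal (univ.erase m) t).coeff n = 1 := by
    have hm : (Lagrange.nodal (univ.erase m) t).Monic := Lagrange.nodal_monic
    have hnd : (Lagrange.nodal (univ.erase m) t).natDegree = n := by
      rw [Lagrange.natDegree_nodal, hcard]
    have := hm.coeff_natDegree
    rwa [hnd] at this
  rw [Polynomial.coeff_C_mul, hbasis, Polynomial.coeff_C_mul, hcoeff, mul_one,
    Finset.prod_inv_distrib, div_eq_mul_inv]

lemma divided_diff_mvt (n : ℕ) (g : ℝ → ℝ) (hg : ContDiff ℝ ∞ g)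
    (t : Fin (n + 1) → ℝ) (ht : StrictMono t) :
    ∃ ξ ∈ Set.Icc (t 0) (t (Fin.last n)),
      (Nat.factorial n : ℝ) *
          ∑ m : Fin (n + 1), g (t m) / ∏ l ∈ univ.erase m, (t m - t l)
        = iteratedDeriv n g ξ := by
  set p := Lagrange.interpolate univ t (fun i => g (t i)) with hp
  have hinj : Set.InjOn t ↑(univ : Finset (Fin (n+1))) := Set.injOn_of_injective ht.injective
  have hzero : ∀ i, g (t i) - p.eval (t i) = 0 := fun i => by
    rw [hp, Lagrange.eval_interpolate_at_node (v := t) (r := fun i => g (t i)) hinj (Finset.mem_univ i)]; ring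
  obtain ⟨ξ, hξI, hξ⟩ := iterated_rolle n (fun x => g x - p.eval x)
    (hg.sub (contDiff_polyeval p)) t ht hzero
  refine ⟨ξ, hξI, ?_⟩
  rw [my_iteratedDeriv_sub n hg (contDiff_polyeval p)] at hξ
  have h1 : iteratedDeriv n g ξ = iteratedDeriv n (fun x => p.eval x) ξ := by
    have := hξ
    simp only [sub_eq_zero] at this
    exact this
  rw [h1, iteratedDeriv_polyeval]
  have hnd : p.natDegree ≤ n := by
    have hdeg : p.degree < ((n + 1 : ℕ) : WithBot ℕ) := by
      have := Lagrange.degree_interpolate_lt (r := fun i => g (t i)) hinj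
      simp only [Finset.card_univ, Fintype.card_fin] at this
      exact this
    rcases eq_or_ne p 0 with h0 | h0
    · simp [h0]
    · have := (Polynomial.natDegree_lt_iff_degree_lt h0).mpr hdeg
      omega
  have h2 : (derivative^[n] p) = C ((n.factorial : ℝ) * p.coeff n) := by
    have hd0 : (derivative^[n] p).natDegree ≤ 0 :=
      le_trans (Polynomial.natDegree_iterate_derivative p n) (by omega)
    rw [Polynomial.eq_C_of_natDegree_le_zero hd0]
    congr 1
    rw [Polynomial.coeff_iterate_derivative]
    simp [Nat.descFactorial_self, mul_comm]
  rw [h2]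
  simp only [Polynomial.eval_C]
  rw [hp, lagrange_coeff_top n t]


lemma exp_I_lipschitz (c a b : ℝ) :
    ‖Complex.exp (Complex.I * c * a) - Complex.exp (Complex.I * c * b)‖
      ≤ |c| * |a - b| := by
  have hd : ∀ x ∈ Set.univ, HasDerivWithinAt (fun t : ℝ => Complex.exp (Complex.I * c * t))
      ((fun x : ℝ => Complex.I * c * Complex.exp (Complex.I * c * x)) x) Set.univ x :=
    fun x _ => (hasDerivAt_expI c x).hasDerivWithinAt
  have hb : ∀ x : ℝ, x ∈ Set.univ →
      ‖Complex.I * (c : ℂ) * Complex.exp (Complex.I * c * (x : ℂ))‖ ≤ |c| := by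
    intro x _
    rw [norm_mul, norm_mul]
    simp [Complex.norm_exp, Complex.mul_re]
  have := convex_univ.norm_image_sub_le_of_norm_hasDerivWithin_le hd hb
    (Set.mem_univ b) (Set.mem_univ a)
  simpa using this



lemma entrywise_bound (n : ℕ) (c : ℝ) (t : Fin (n + 1) → ℝ) (ht : StrictMono t)
    (h : ℝ) (hh : t (Fin.last n) - t 0 ≤ h) :
    ‖(n.factorial : ℂ) *
        (∑ m : Fin (n + 1), Complex.exp (Complex.I * c * t m) /
          ∏ l ∈ univ.erase m, ((t m : ℂ) - (t l : ℂ)))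
      - (Complex.I * c) ^ n * Complex.exp (Complex.I * c * t 0)‖
      ≤ Real.sqrt 2 * (|c| ^ (n + 1) * h) := by
  have h0 : (0:ℝ) ≤ h :=
    le_trans (sub_nonneg.mpr (ht.monotone (Fin.zero_le _))) hh
  set E : ℝ → ℂ := fun x => Complex.exp (Complex.I * c * x) with hE
  set D : Fin (n + 1) → ℝ := fun m => ∏ l ∈ univ.erase m, (t m - t l) with hD
  have hprod : ∀ m : Fin (n + 1),
      (∏ l ∈ univ.erase m, ((t m : ℂ) - (t l : ℂ))) = ((D m : ℝ) : ℂ) := by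
    intro m; rw [hD]; push_cast; ring
  set S : ℂ := (n.factorial : ℂ) * (∑ m, E (t m) / ((D m : ℝ) : ℂ)) with hS
  set u : ℂ := (Complex.I * c) ^ n * E (t 0) with hu
  have hgoal : (n.factorial : ℂ) *
        (∑ m : Fin (n + 1), Complex.exp (Complex.I * c * t m) /
          ∏ l ∈ univ.erase m, ((t m : ℂ) - (t l : ℂ)))
      - (Complex.I * c) ^ n * Complex.exp (Complex.I * c * t 0) = S - u := by
    rw [hS, hu]
    congr 2
    exact Finset.sum_congr rfl fun m _ => by rw [hprod m]
  rw [hgoal]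
  set M := |c| ^ (n + 1) * h with hM
  have hM0 : 0 ≤ M := mul_nonneg (pow_nonneg (abs_nonneg c) _) h0
  -- the key bound for any ξ in the interval
  have key : ∀ ξ ∈ Set.Icc (t 0) (t (Fin.last n)),
      ‖(Complex.I * c) ^ n * (E ξ - E (t 0))‖ ≤ M := by
    intro ξ hξ
    have h1 : ‖(Complex.I * c) ^ n * (E ξ - E (t 0))‖
        = |c| ^ n * ‖E ξ - E (t 0)‖ := by
      rw [norm_mul, norm_pow, norm_mul, Complex.norm_I, Complex.norm_real, Real.norm_eq_abs, one_mul]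
    rw [h1, hM, pow_succ]
    have h2 : ‖E ξ - E (t 0)‖ ≤ |c| * h := by
      refine le_trans (exp_I_lipschitz c ξ (t 0)) ?_
      have : |ξ - t 0| ≤ h := by
        rw [_root_.abs_of_nonneg (sub_nonneg.mpr hξ.1)]
        linarith [hξ.2]
      exact mul_le_mul_of_nonneg_left this (abs_nonneg c)
    calc |c| ^ n * ‖E ξ - E (t 0)‖ ≤ |c| ^ n * (|c| * h) :=
          mul_le_mul_of_nonneg_left h2 (pow_nonneg (abs_nonneg c) n)
      _ = |c| ^ n * |c| * h := by ring
  -- real part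
  have hRe : ContDiff ℝ ∞ (fun x => (E x).re) :=
    Complex.reCLM.contDiff.comp (contDiff_expI c)
  obtain ⟨ξ₁, hξ₁I, hξ₁⟩ := divided_diff_mvt n (fun x => (E x).re) hRe t ht
  have hSre : S.re = ((Complex.I * c) ^ n * E ξ₁).re := by
    rw [hS, Complex.mul_re]
    simp only [Complex.natCast_re, Complex.natCast_im, zero_mul, sub_zero]
    rw [Complex.re_sum]
    have heq : ∑ m : Fin (n+1), (E (t m) / ((D m : ℝ) : ℂ)).re
        = ∑ m : Fin (n+1), (fun x => (E x).re) (t m) / D m :=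
      Finset.sum_congr rfl fun m _ => Complex.div_ofReal_re _ _
    rw [heq, hξ₁, iteratedDeriv_re n (contDiff_expI c) ξ₁]
    rw [show (iteratedDeriv n fun t : ℝ => Complex.exp (Complex.I * c * t))
      = fun t : ℝ => (Complex.I * c) ^ n * Complex.exp (Complex.I * c * t) from
        iteratedDeriv_expI n c]
  have hre_bound : |(S - u).re| ≤ M := by
    have heq : (S - u).re = ((Complex.I * c) ^ n * (E ξ₁ - E (t 0))).re := by
      rw [Complex.sub_re, hSre, hu, mul_sub, Complex.sub_re]
    rw [heq]
    exact le_trans (Complex.abs_re_le_norm _) (key ξ₁ hξ₁I)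
  -- imaginary part
  have hIm : ContDiff ℝ ∞ (fun x => (E x).im) :=
    Complex.imCLM.contDiff.comp (contDiff_expI c)
  obtain ⟨ξ₂, hξ₂I, hξ₂⟩ := divided_diff_mvt n (fun x => (E x).im) hIm t ht
  have hSim : S.im = ((Complex.I * c) ^ n * E ξ₂).im := by
    rw [hS, Complex.mul_im]
    simp only [Complex.natCast_re, Complex.natCast_im, zero_mul, add_zero]
    rw [Complex.im_sum]
    have heq : ∑ m : Fin (n+1), (E (t m) / ((D m : ℝ) : ℂ)).im
        = ∑ m : Fin (n+1), (fun x => (E x).im) (t m) / D m :=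
      Finset.sum_congr rfl fun m _ => Complex.div_ofReal_im _ _
    rw [heq, hξ₂, iteratedDeriv_im n (contDiff_expI c) ξ₂]
    rw [show (iteratedDeriv n fun t : ℝ => Complex.exp (Complex.I * c * t))
      = fun t : ℝ => (Complex.I * c) ^ n * Complex.exp (Complex.I * c * t) from
        iteratedDeriv_expI n c]
  have him_bound : |(S - u).im| ≤ M := by
    have heq : (S - u).im = ((Complex.I * c) ^ n * (E ξ₂ - E (t 0))).im := by
      rw [Complex.sub_im, hSim, hu, mul_sub, Complex.sub_im]
    rw [heq]
    exact le_trans (Complex.abs_im_le_norm _) (key ξ₂ hξ₂I)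
  calc ‖S - u‖ ≤ Real.sqrt 2 * max |(S - u).re| |(S - u).im| :=
        Complex.norm_le_sqrt_two_mul_max _
    _ ≤ Real.sqrt 2 * M :=
        mul_le_mul_of_nonneg_left (max_le hre_bound him_bound) (Real.sqrt_nonneg 2)


lemma normalize_diff {V : Type*} [NormedAddCommGroup V] [NormedSpace ℝ V]
    (u w : V) (hu : u ≠ 0) (hw : w ≠ 0) :
    ‖‖u‖⁻¹ • u - ‖w‖⁻¹ • w‖ ≤ 2 * ‖u - w‖ / ‖u‖ := by
  have ha : 0 < ‖u‖ := norm_pos_iff.mpr hu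
  have hb : 0 < ‖w‖ := norm_pos_iff.mpr hw
  have h1 : ‖u‖⁻¹ • u - ‖w‖⁻¹ • w = ‖u‖⁻¹ • (u - w) + (‖u‖⁻¹ - ‖w‖⁻¹) • w := by
    rw [smul_sub, sub_smul]; abel
  rw [h1]
  refine le_trans (norm_add_le _ _) ?_
  rw [norm_smul, norm_smul, Real.norm_eq_abs, Real.norm_eq_abs,
    _root_.abs_of_nonneg (inv_nonneg.mpr ha.le)]
  have h2 : |‖u‖⁻¹ - ‖w‖⁻¹| * ‖w‖ = |‖w‖ - ‖u‖| / ‖u‖ := by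
    have he : ‖u‖⁻¹ - ‖w‖⁻¹ = (‖w‖ - ‖u‖) / (‖u‖ * ‖w‖) := by
      field_simp
    rw [he, abs_div, _root_.abs_of_pos (mul_pos ha hb)]
    field_simp
  rw [h2]
  have h3 : |‖w‖ - ‖u‖| ≤ ‖u - w‖ := by
    have := abs_norm_sub_norm_le w u
    rwa [norm_sub_rev] at this
  have h4 : ‖u‖⁻¹ * ‖u - w‖ = ‖u - w‖ / ‖u‖ := by ring
  rw [h4]
  rw [← add_div]
  rw [div_le_div_iff_of_pos_right ha]  -- maybe wrong name
  linarith


theorem divided_difference_basis_close_to_limit_basis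
    (s N : ℕ) (hs : 1 ≤ s) (hN1 : 1 ≤ N) (hNs : s - 1 ≤ N)
    (x : Fin s → ℝ) (hmono : StrictMono x)
    (h : ℝ) (hh : ∀ a b : Fin s, |x a - x b| ≤ h)
    (j : ℕ) (hj1 : 1 ≤ j) (hjs : j ≤ s)
    (w u : EuclideanSpace ℂ (Fin (N + 1)))
    -- `(w)_k = (j-1)! · [x₁,…,x_j] e^{ikx}` via the explicit formula for distinct nodes
    (hw : ∀ k : Fin (N + 1), w k = (Nat.factorial (j - 1) : ℂ) *
      ∑ m : Fin j, Complex.exp (Complex.I * (k : ℕ) * x (Fin.castLE hjs m)) /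
        ∏ l ∈ Finset.univ.erase m,
          ((x (Fin.castLE hjs m) : ℂ) - x (Fin.castLE hjs l)))
    (hu : ∀ k : Fin (N + 1), u k = (Complex.I * (k : ℕ)) ^ (j - 1) *
      Complex.exp (Complex.I * (k : ℕ) * x ⟨0, hs⟩)) :
    ‖‖u‖⁻¹ • u - ‖w‖⁻¹ • w‖ ≤ 2 * Real.sqrt 2 * N * h := by
  obtain ⟨n, rfl⟩ : ∃ n, j = n + 1 := ⟨j - 1, by omega⟩
  have h0 : (0:ℝ) ≤ h := by simpa using hh ⟨0, hs⟩ ⟨0, hs⟩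
  set t : Fin (n + 1) → ℝ := fun m => x (Fin.castLE hjs m) with htdef
  have ht : StrictMono t := fun a b hab =>
    hmono (by simp only [Fin.lt_def, Fin.coe_castLE]; exact hab)
  have ht0 : t 0 = x ⟨0, hs⟩ := rfl
  have hΔ : t (Fin.last n) - t 0 ≤ h := le_trans (le_abs_self _) (hh _ _)
  -- entrywise bound
  have hentry : ∀ k : Fin (N + 1),
      ‖w k - u k‖ ≤ Real.sqrt 2 * (((k : ℕ) : ℝ) ^ (n + 1) * h) := by
    intro k
    have hb := entrywise_bound n (((k : ℕ) : ℝ)) t ht h hΔ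
    rw [_root_.abs_of_nonneg (Nat.cast_nonneg _)] at hb
    have hwk : w k = (n.factorial : ℂ) *
        (∑ m : Fin (n + 1), Complex.exp (Complex.I * (((k : ℕ) : ℝ) : ℂ) * t m) /
          ∏ l ∈ univ.erase m, ((t m : ℂ) - (t l : ℂ))) := by
      rw [hw k]
      norm_num
      left; rfl
    have huk : u k = (Complex.I * (((k : ℕ) : ℝ) : ℂ)) ^ n *
        Complex.exp (Complex.I * (((k : ℕ) : ℝ) : ℂ) * t 0) := by
      rw [hu k, ← ht0]
      norm_num
    rw [hwk, huk]
    exact hb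
  -- norms
  set A := Real.sqrt 2 * N * h with hA
  have hA0 : 0 ≤ A := by positivity
  have hAsq : A ^ 2 = 2 * (N : ℝ) ^ 2 * h ^ 2 := by
    rw [hA, mul_pow, mul_pow, Real.sq_sqrt (by norm_num : (2:ℝ) ≥ 0)]
  have hukn : ∀ k : Fin (N + 1), ‖u k‖ = ((k : ℕ) : ℝ) ^ n := by
    intro k
    rw [hu k, norm_mul, norm_pow, norm_mul]
    have he : ‖Complex.exp (Complex.I * (k : ℕ) * (x ⟨0, hs⟩ : ℂ))‖ = 1 := by
      rw [Complex.norm_exp]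
      simp [Complex.mul_re]
    rw [he, mul_one]
    simp
  have hnormuw : ‖u - w‖ ≤ A * ‖u‖ := by
    rw [EuclideanSpace.norm_eq, EuclideanSpace.norm_eq]
    have hterm : ∀ k : Fin (N + 1), ‖(u - w) k‖ ^ 2 ≤ A ^ 2 * ‖u k‖ ^ 2 := by
      intro k
      have h1 : ‖(u - w) k‖ = ‖w k - u k‖ := by
        have : (u - w) k = u k - w k := rfl
        rw [this, norm_sub_rev]
      have h2 : ‖w k - u k‖ ≤ Real.sqrt 2 * (((k : ℕ) : ℝ) ^ n * ((N : ℝ) * h)) := by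
        refine le_trans (hentry k) ?_
        have hkN : ((k : ℕ) : ℝ) ≤ (N : ℝ) := by
          exact_mod_cast Nat.lt_succ_iff.mp k.isLt
        have : ((k : ℕ) : ℝ) ^ (n + 1) * h ≤ ((k : ℕ) : ℝ) ^ n * ((N : ℝ) * h) := by
          rw [pow_succ]
          have hc : (0:ℝ) ≤ ((k:ℕ):ℝ) ^ n := pow_nonneg (Nat.cast_nonneg _) n
          have h2' := mul_le_mul_of_nonneg_right (mul_le_mul_of_nonneg_left hkN hc) h0
          ring_nf at h2' ⊢
          linarith
        exact mul_le_mul_of_nonneg_left this (Real.sqrt_nonneg 2)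
      rw [h1, hukn k]
      calc ‖w k - u k‖ ^ 2
          ≤ (Real.sqrt 2 * (((k : ℕ) : ℝ) ^ n * ((N : ℝ) * h))) ^ 2 := by
            have hnn : (0:ℝ) ≤ ‖w k - u k‖ := norm_nonneg _
            exact pow_le_pow_left₀ hnn h2 2
        _ = A ^ 2 * (((k : ℕ) : ℝ) ^ n) ^ 2 := by
            rw [hAsq, mul_pow, mul_pow, mul_pow, Real.sq_sqrt (by norm_num : (2:ℝ) ≥ 0)]
            ring
    have hsum : ∑ k : Fin (N + 1), ‖(u - w) k‖ ^ 2
        ≤ A ^ 2 * ∑ k : Fin (N + 1), ‖u k‖ ^ 2 := by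
      rw [Finset.mul_sum]
      exact Finset.sum_le_sum fun k _ => hterm k
    calc Real.sqrt (∑ k : Fin (N + 1), ‖(u - w) k‖ ^ 2)
        ≤ Real.sqrt (A ^ 2 * ∑ k : Fin (N + 1), ‖u k‖ ^ 2) := Real.sqrt_le_sqrt hsum
      _ = A * Real.sqrt (∑ k : Fin (N + 1), ‖u k‖ ^ 2) := by
          rw [Real.sqrt_mul (sq_nonneg A), Real.sqrt_sq hA0]
  have hune : u ≠ 0 := by
    intro h0'
    have hk : u ⟨1, by omega⟩ = 0 := by rw [h0']; rfl
    rw [hu ⟨1, by omega⟩] at hk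
    exact mul_ne_zero
      (pow_ne_zero _ (mul_ne_zero Complex.I_ne_zero (by norm_num)))
      (Complex.exp_ne_zero _) hk
  have hupos : 0 < ‖u‖ := norm_pos_iff.mpr hune
  have hfinal : 2 * Real.sqrt 2 * N * h = 2 * A := by rw [hA]; ring
  by_cases hcase : 1 ≤ A
  · have hnu : ‖‖u‖⁻¹ • u‖ ≤ 1 := by
      rw [norm_smul, Real.norm_eq_abs, _root_.abs_of_nonneg (inv_nonneg.mpr hupos.le)]
      rw [inv_mul_cancel₀ hupos.ne']
    have hnw : ‖‖w‖⁻¹ • w‖ ≤ 1 := by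
      rw [norm_smul, Real.norm_eq_abs, _root_.abs_of_nonneg (inv_nonneg.mpr (norm_nonneg w))]
      rcases eq_or_lt_of_le (norm_nonneg w) with hw0 | hw0
      · rw [← hw0]; norm_num
      · rw [inv_mul_cancel₀ hw0.ne']
    calc ‖‖u‖⁻¹ • u - ‖w‖⁻¹ • w‖ ≤ ‖‖u‖⁻¹ • u‖ + ‖‖w‖⁻¹ • w‖ := norm_sub_le _ _
      _ ≤ 1 + 1 := add_le_add hnu hnw
      _ ≤ 2 * A := by linarith
      _ = 2 * Real.sqrt 2 * N * h := hfinal.symm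
  · push_neg at hcase
    have hwne : w ≠ 0 := by
      intro hw0
      rw [hw0, sub_zero] at hnormuw
      nlinarith
    calc ‖‖u‖⁻¹ • u - ‖w‖⁻¹ • w‖ ≤ 2 * ‖u - w‖ / ‖u‖ := normalize_diff u w hune hwne
      _ ≤ 2 * (A * ‖u‖) / ‖u‖ := by gcongr
      _ = 2 * A := by
          rw [mul_div_assoc, mul_div_cancel_right₀ A hupos.ne']
      _ = 2 * Real.sqrt 2 * N * h := hfinal.symm
end

section
/- Fix a positive integer s. There exist a constant C(s) and a constant Ξ(s) = √(λ_min(H̄_s)/2) > 0 (where H̄_s is the normalized Hilbert matrix) such that for every ζ ∈ (-π,π] and every N ≥ C(s), the smallest singular value of the matrix U(ζ,N,s) ∈ ℂ^{(N+1)×s}, whose j-th column is the normalized limit vector ũ_j with (ũ_j)_k = (ik)^{j-1}e^{ikζ}/‖u_j‖, satisfies σ_min(U(ζ,N,s)) ≥ Ξ(s). -/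
open Complex Finset

/-- The `s × s` normalized Hilbert matrix (indexed from `0`). -/
noncomputable def normHilbert (s : ℕ) : Matrix (Fin s) (Fin s) ℝ :=
  Matrix.of fun j l =>
    Real.sqrt (2 * (j : ℕ) + 1) * Real.sqrt (2 * (l : ℕ) + 1) /
      ((j : ℕ) + (l : ℕ) + 1)

/-!
With `d_j = i^j c_j` the phases `e^{ikζ}` and `i^j` drop out of the norm, so `‖∑ c_j ũ_j‖²` is the
sum of the quadratic forms at `Re d` and `Im d` of the Gram matrix `WᵀW` of the real vectors
`k ↦ k^j / ‖k^j‖`. Since `∑_{k ≤ N} k^m ~ N^{m+1}/(m+1)`, this Gram matrix tends to `H̄_s`, which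
is positive definite because `xᵀ H̄_s x = ∫₀¹ (∑_j x_j √(2j+1) t^j)² dt`. For large `N` the form
therefore stays above `λ_min(H̄_s)/2 · ‖d‖²`, and `‖d‖ = ‖c‖`.
-/

open Matrix Filter Topology Polynomial

section QuadraticForm

variable {n : Type*} [Fintype n]

lemma Matrix.IsHermitian.mul_dotProduct_self_le [DecidableEq n]
    {A : Matrix n n ℝ} (hA : A.IsHermitian) {lam : ℝ} (hlam : ∀ i, lam ≤ hA.eigenvalues i)
    (x : n → ℝ) : lam * (x ⬝ᵥ x) ≤ x ⬝ᵥ A *ᵥ x := by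
  have hpsd : (A - algebraMap ℝ _ lam).PosSemidef := by
    refine posSemidef_iff_isHermitian_and_spectrum_nonneg.2
      ⟨hA.sub (by simp [Algebra.algebraMap_eq_smul_one, IsHermitian]), ?_⟩
    rw [← spectrum.sub_singleton_eq, hA.spectrum_real_eq_range_eigenvalues]
    rintro _ ⟨_, ⟨i, rfl⟩, _, rfl, rfl⟩
    exact sub_nonneg.2 (hlam i)
  simpa only [star_trivial, Algebra.algebraMap_eq_smul_one, sub_mulVec, smul_mulVec, one_mulVec,
    dotProduct_sub, dotProduct_smul, smul_eq_mul, sub_nonneg] using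
    hpsd.dotProduct_mulVec_nonneg x

lemma abs_dotProduct_mulVec_le {E : Matrix n n ℝ} {ε : ℝ} (hε : 0 ≤ ε) (hE : ∀ i j, |E i j| ≤ ε)
    (x : n → ℝ) : |x ⬝ᵥ E *ᵥ x| ≤ Fintype.card n * ε * (x ⬝ᵥ x) := by
  calc |x ⬝ᵥ E *ᵥ x| = |∑ i, ∑ j, x i * E i j * x j| := by
        simp only [dotProduct, mulVec, mul_sum, mul_assoc]
    _ ≤ ∑ i, ∑ j, |x i| * ε * |x j| := by
        refine (abs_sum_le_sum_abs _ _).trans (sum_le_sum fun i _ => ?_)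
        refine (abs_sum_le_sum_abs _ _).trans (sum_le_sum fun j _ => ?_)
        rw [abs_mul, abs_mul]
        gcongr
        exact hE i j
    _ = ε * (∑ i, |x i|) ^ 2 := by
        rw [sq, sum_mul_sum, mul_sum]
        refine sum_congr rfl fun i _ => ?_
        rw [mul_sum]
        exact sum_congr rfl fun j _ => by ring
    _ ≤ ε * (Fintype.card n * ∑ i, |x i| ^ 2) := by
        gcongr
        exact sq_sum_le_card_mul_sum_sq
    _ = Fintype.card n * ε * (x ⬝ᵥ x) := by
        simp only [dotProduct, mul_sum]
        exact sum_congr rfl fun i _ => by rw [sq_abs]; ring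

lemma eventually_mul_dotProduct_self_le_of_tendsto [DecidableEq n] {ι : Type*} {l : Filter ι}
    {B : ι → Matrix n n ℝ} {A : Matrix n n ℝ} (hB : Tendsto B l (𝓝 A)) (hA : A.IsHermitian)
    {lam μ : ℝ} (hlam : ∀ i, lam ≤ hA.eigenvalues i) (hμ : μ < lam) :
    ∀ᶠ t in l, ∀ x, μ * (x ⬝ᵥ x) ≤ x ⬝ᵥ B t *ᵥ x := by
  set ε := (lam - μ) / (Fintype.card n + 1)
  have hε : 0 < ε := div_pos (sub_pos.2 hμ) (by positivity)
  have hcard : Fintype.card n * ε ≤ lam - μ := by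
    rw [← mul_div_assoc, div_le_iff₀ (by positivity)]
    nlinarith [sub_pos.2 hμ]
  have hclose : ∀ᶠ t in l, ∀ i j, |(B t - A) i j| ≤ ε := by
    simp only [eventually_all]
    intro i j
    have hij := tendsto_pi_nhds.1 (tendsto_pi_nhds.1 hB i) j
    filter_upwards [hij.eventually (Metric.closedBall_mem_nhds _ hε)] with t ht
    simpa [Real.dist_eq] using ht
  filter_upwards [hclose] with t ht x
  have hxx : 0 ≤ x ⬝ᵥ x := sum_nonneg fun i _ => mul_self_nonneg (x i)
  have hsplit : x ⬝ᵥ B t *ᵥ x = x ⬝ᵥ A *ᵥ x + x ⬝ᵥ (B t - A) *ᵥ x := by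
    rw [sub_mulVec, dotProduct_sub]; ring
  nlinarith [hA.mul_dotProduct_self_le hlam x, abs_dotProduct_mulVec_le hε.le ht x,
    neg_abs_le (x ⬝ᵥ (B t - A) *ᵥ x)]

end QuadraticForm

lemma mul_sum_norm_sq_le_sum_norm_sq_of_real {m n : Type*} [Fintype m] [Fintype n]
    {W : Matrix m n ℝ} {μ : ℝ} (hW : ∀ x : n → ℝ, μ * (x ⬝ᵥ x) ≤ x ⬝ᵥ (Wᵀ * W) *ᵥ x)
    (d : n → ℂ) : μ * ∑ j, ‖d j‖ ^ 2 ≤ ∑ k, ‖∑ j, W k j * d j‖ ^ 2 := by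
  have hW' (x : n → ℝ) : μ * (x ⬝ᵥ x) ≤ (W *ᵥ x) ⬝ᵥ (W *ᵥ x) := by
    simpa only [← mulVec_mulVec, dotProduct_mulVec, vecMul_transpose] using hW x
  have hnorm (z : ℂ) : ‖z‖ ^ 2 = z.re * z.re + z.im * z.im := by
    rw [Complex.sq_norm, normSq_apply]
  have hd : ∑ j, ‖d j‖ ^ 2 = (fun j => (d j).re) ⬝ᵥ (fun j => (d j).re) +
      (fun j => (d j).im) ⬝ᵥ (fun j => (d j).im) := by
    simp only [hnorm, dotProduct, sum_add_distrib]
  have hWd : ∑ k, ‖∑ j, W k j * d j‖ ^ 2 =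
      (W *ᵥ fun j => (d j).re) ⬝ᵥ (W *ᵥ fun j => (d j).re) +
      (W *ᵥ fun j => (d j).im) ⬝ᵥ (W *ᵥ fun j => (d j).im) := by
    simp only [hnorm, dotProduct, mulVec, sum_add_distrib, re_sum, im_sum, re_ofReal_mul,
      im_ofReal_mul]
  rw [hd, hWd, mul_add]
  exact add_le_add (hW' _) (hW' _)

lemma integral_sq_eval_pos {p : ℝ[X]} (hp : p ≠ 0) : 0 < ∫ t in (0 : ℝ)..1, p.eval t ^ 2 := by
  obtain ⟨c, hc, hroot⟩ : ∃ c ∈ Set.Icc (0 : ℝ) 1, ¬ p.IsRoot c :=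
    ((Set.Icc_infinite zero_lt_one).sdiff (p.finite_setOfPred_isRoot hp)).nonempty
  exact intervalIntegral.integral_pos zero_lt_one (by fun_prop) (fun _ _ => sq_nonneg _)
    ⟨c, hc, sq_pos_of_ne_zero hroot⟩

lemma integral_sq_sum_monomial {s : ℕ} (y : Fin s → ℝ) :
    ∫ t in (0 : ℝ)..1, (∑ j : Fin s, y j * t ^ (j : ℕ)) ^ 2 =
      ∑ j : Fin s, ∑ l : Fin s, y j * y l / ((j : ℕ) + (l : ℕ) + 1) := by
  simp_rw [sq, sum_mul_sum]
  rw [intervalIntegral.integral_finsetSum fun j _ =>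
    Continuous.intervalIntegrable (by fun_prop) _ _]
  refine sum_congr rfl fun j _ => ?_
  rw [intervalIntegral.integral_finsetSum fun l _ =>
    Continuous.intervalIntegrable (by fun_prop) _ _]
  refine sum_congr rfl fun l _ => ?_
  simp_rw [mul_mul_mul_comm, ← pow_add]
  rw [intervalIntegral.integral_const_mul, integral_pow]
  push_cast
  ring

lemma normHilbert_posDef (s : ℕ) : (normHilbert s).PosDef := by
  refine .of_dotProduct_mulVec_pos ?_ fun x hx => ?_
  · ext j l
    simp only [normHilbert, conjTranspose_apply, of_apply, star_trivial]
    ring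
  set y : Fin s → ℝ := fun j => x j * √(2 * (j : ℕ) + 1)
  set p : ℝ[X] := ∑ j : Fin s, C (y j) * X ^ (j : ℕ)
  have hquad : star x ⬝ᵥ normHilbert s *ᵥ x = ∫ t in (0 : ℝ)..1, p.eval t ^ 2 := by
    simp only [p, eval_finsetSum, eval_mul, eval_C, eval_pow, eval_X, integral_sq_sum_monomial]
    simp only [star_trivial, dotProduct, mulVec, normHilbert, of_apply, mul_sum, y]
    refine sum_congr rfl fun j _ => sum_congr rfl fun l _ => ?_
    ring
  have hp : p ≠ 0 := by
    obtain ⟨j₀, hj₀⟩ := Function.ne_iff.1 hx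
    intro h
    have hcoeff := congrArg (coeff · (j₀ : ℕ)) h
    simp only [p, finsetSum_coeff, coeff_C_mul_X_pow, Fin.val_inj, sum_ite_eq, mem_univ,
      if_true, coeff_zero] at hcoeff
    exact mul_ne_zero hj₀ (Real.sqrt_pos.2 (by positivity)).ne' hcoeff
  exact hquad ▸ integral_sq_eval_pos hp

noncomputable def powerSum (m N : ℕ) : ℝ := ∑ k ∈ range (N + 1), (k : ℝ) ^ m

lemma powerSum_nonneg (m N : ℕ) : 0 ≤ powerSum m N :=
  sum_nonneg fun _ _ => by positivity

lemma pow_succ_div_le_powerSum (m N : ℕ) : (N : ℝ) ^ (m + 1) / (m + 1) ≤ powerSum m N := by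
  have h := (pow_left_monotoneOn.mono fun _ hx => hx.1 :
    MonotoneOn (fun x : ℝ => x ^ m) (Set.Icc 0 (0 + N))).integral_le_sum
  simp only [zero_add, integral_pow, ne_eq, Nat.add_eq_zero_iff, one_ne_zero, and_false,
    not_false_eq_true, zero_pow, sub_zero, Nat.cast_add, Nat.cast_one] at h
  rw [powerSum, sum_range_succ']
  push_cast
  linarith [pow_nonneg (le_refl (0 : ℝ)) m]

lemma powerSum_le_succ_pow_div (m N : ℕ) : powerSum m N ≤ ((N : ℝ) + 1) ^ (m + 1) / (m + 1) := by
  have h := (pow_left_monotoneOn.mono fun _ hx => hx.1 :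
    MonotoneOn (fun x : ℝ => x ^ m) (Set.Icc 0 (0 + (N + 1 : ℕ)))).sum_le_integral
  simpa [integral_pow, powerSum] using h

lemma tendsto_powerSum_div_pow (m : ℕ) :
    Tendsto (fun N : ℕ => powerSum m N / (N : ℝ) ^ (m + 1)) atTop (𝓝 (1 / (m + 1))) := by
  have hupper : Tendsto (fun N : ℕ => (1 + 1 / (N : ℝ)) ^ (m + 1) / (m + 1)) atTop
      (𝓝 (1 / (m + 1))) := by
    simpa using ((tendsto_one_div_atTop_nhds_zero_nat.const_add 1).pow (m + 1)).div_const
      ((m : ℝ) + 1)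
  refine tendsto_of_tendsto_of_tendsto_of_le_of_le' tendsto_const_nhds hupper ?_ ?_
  all_goals filter_upwards [eventually_gt_atTop 0] with N hN
  all_goals have hN : (0 : ℝ) < (N : ℝ) ^ (m + 1) := by positivity
  · calc 1 / ((m : ℝ) + 1) = (N : ℝ) ^ (m + 1) / (m + 1) / (N : ℝ) ^ (m + 1) := by
          field_simp
      _ ≤ _ := by gcongr; exact pow_succ_div_le_powerSum m N
  · calc powerSum m N / (N : ℝ) ^ (m + 1)
        ≤ ((N : ℝ) + 1) ^ (m + 1) / (m + 1) / (N : ℝ) ^ (m + 1) := by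
          gcongr; exact powerSum_le_succ_pow_div m N
      _ = _ := by
          have : (N : ℝ) ≠ 0 := by positivity
          rw [one_add_div this, div_pow]
          field_simp

noncomputable def monomialMatrix (N s : ℕ) : Matrix (Fin (N + 1)) (Fin s) ℝ :=
  Matrix.of fun k j => ((k : ℕ) : ℝ) ^ (j : ℕ) / √(powerSum (2 * j) N)

lemma transpose_mul_monomialMatrix_apply (N s : ℕ) (j l : Fin s) :
    ((monomialMatrix N s)ᵀ * monomialMatrix N s) j l =
      powerSum (j + l) N / √(powerSum (2 * j) N * powerSum (2 * l) N) := by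
  have hsum := Fin.sum_univ_eq_sum_range (fun k => (k : ℝ) ^ ((j : ℕ) + l)) (N + 1)
  rw [Real.sqrt_mul (powerSum_nonneg _ _), powerSum, ← hsum, sum_div]
  simp only [Matrix.mul_apply, Matrix.transpose_apply, monomialMatrix, Matrix.of_apply]
  refine sum_congr rfl fun k _ => ?_
  rw [pow_add]; ring

lemma powerSum_div_sqrt_mul_eq_rescaled {N : ℕ} (hN : 0 < N) (p q r : ℕ)
    (hpqr : 2 * p = q + r) :
    powerSum p N / √(powerSum q N * powerSum r N) =
      powerSum p N / (N : ℝ) ^ (p + 1) /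
        √(powerSum q N / (N : ℝ) ^ (q + 1) * (powerSum r N / (N : ℝ) ^ (r + 1))) := by
  have hN' : (0 : ℝ) < N := by exact_mod_cast hN
  have : (N : ℝ) ^ (q + 1) * (N : ℝ) ^ (r + 1) = ((N : ℝ) ^ (p + 1)) ^ 2 := by
    rw [← pow_add, ← pow_mul]; congr 1; omega
  rw [div_mul_div_comm, this, Real.sqrt_div' _ (by positivity), Real.sqrt_sq (by positivity),
    div_div_div_cancel_right₀ (by positivity)]

lemma tendsto_gram_monomialMatrix (s : ℕ) :
    Tendsto (fun N => (monomialMatrix N s)ᵀ * monomialMatrix N s) atTop (𝓝 (normHilbert s)) := by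
  refine tendsto_pi_nhds.2 fun j => tendsto_pi_nhds.2 fun l => ?_
  have hlim := (tendsto_powerSum_div_pow (j + l)).div
    ((tendsto_powerSum_div_pow (2 * j)).mul (tendsto_powerSum_div_pow (2 * l))).sqrt
    (by positivity)
  have hH : normHilbert s j l = 1 / (((j + l : ℕ) : ℝ) + 1) /
      √(1 / (((2 * j : ℕ) : ℝ) + 1) * (1 / (((2 * l : ℕ) : ℝ) + 1))) := by
    simp only [normHilbert, Matrix.of_apply, one_div, ← mul_inv, Real.sqrt_inv]
    push_cast
    rw [Real.sqrt_mul (by positivity)]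
    field_simp
  rw [hH]
  refine hlim.congr' ?_
  filter_upwards [eventually_gt_atTop 0] with N hN
  rw [transpose_mul_monomialMatrix_apply, powerSum_div_sqrt_mul_eq_rescaled hN _ _ _ (by ring)]
  rfl

lemma norm_exp_I_mul_natCast_mul (k : ℕ) (ζ : ℝ) : ‖exp (I * k * ζ)‖ = 1 := by
  rw [show I * k * ζ = ((k * ζ : ℝ) : ℂ) * I by push_cast; ring]
  exact norm_exp_ofReal_mul_I _

lemma norm_eq_sqrt_powerSum {N m : ℕ} {ζ : ℝ} {v : EuclideanSpace ℂ (Fin (N + 1))}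
    (hv : ∀ k : Fin (N + 1), v k = (I * (k : ℕ)) ^ m * exp (I * (k : ℕ) * ζ)) :
    ‖v‖ = √(powerSum (2 * m) N) := by
  rw [EuclideanSpace.norm_eq, powerSum, ← Fin.sum_univ_eq_sum_range (fun k => (k : ℝ) ^ (2 * m))]
  congr 1
  refine sum_congr rfl fun k _ => ?_
  rw [hv, norm_mul, norm_exp_I_mul_natCast_mul, norm_pow, norm_mul, norm_I, one_mul,
    norm_natCast, mul_one, ← pow_mul, mul_comm]

lemma norm_sq_sum_normalized_eq {N s : ℕ} {ζ : ℝ} {u : ℕ → EuclideanSpace ℂ (Fin (N + 1))}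
    (hu : ∀ j, ∀ k : Fin (N + 1),
      u j k = (I * (k : ℕ)) ^ (j - 1) * exp (I * (k : ℕ) * ζ))
    (c : EuclideanSpace ℂ (Fin s)) :
    ‖∑ j : Fin s, c j • (‖u ((j : ℕ) + 1)‖⁻¹ • u ((j : ℕ) + 1))‖ ^ 2 =
      ∑ k, ‖∑ j, monomialMatrix N s k j * (c j * I ^ (j : ℕ))‖ ^ 2 := by
  have hu' (j : ℕ) (k : Fin (N + 1)) :
      u (j + 1) k = (I * (k : ℕ)) ^ j * exp (I * (k : ℕ) * ζ) := hu (j + 1) k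
  rw [EuclideanSpace.norm_sq_eq]
  refine sum_congr rfl fun k _ => ?_
  have hentry : (∑ j : Fin s, c j • (‖u ((j : ℕ) + 1)‖⁻¹ • u ((j : ℕ) + 1))) k =
      exp (I * (k : ℕ) * ζ) * ∑ j, monomialMatrix N s k j * (c j * I ^ (j : ℕ)) := by
    simp only [WithLp.ofLp_sum, WithLp.ofLp_smul, Finset.sum_apply, Pi.smul_apply, smul_eq_mul,
      Complex.real_smul, hu', norm_eq_sqrt_powerSum (hu' _), monomialMatrix, of_apply, mul_sum]
    refine sum_congr rfl fun j _ => ?_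
    push_cast
    ring
  rw [hentry, norm_mul, norm_exp_I_mul_natCast_mul, one_mul]

/-- Conditioning of the normalized limit basis: for `N` large enough (depending only on
`s`), the smallest singular value of the matrix whose columns are the normalized limit
vectors `ũ_j` is at least `Ξ(s) = √(λ_min(H̄_s)/2) > 0`. -/
theorem limit_basis_well_conditioned (s : ℕ) (hs : 1 ≤ s)
    (hH : (normHilbert s).IsHermitian) :
    0 < Real.sqrt ((⨅ i, hH.eigenvalues i) / 2) ∧
    ∃ C : ℕ, ∀ ζ ∈ Set.Ioc (-Real.pi) Real.pi, ∀ N : ℕ, C ≤ N →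
      ∀ u : ℕ → EuclideanSpace ℂ (Fin (N + 1)),
        (∀ j, ∀ k : Fin (N + 1),
          u j k = (Complex.I * (k : ℕ)) ^ (j - 1) * Complex.exp (Complex.I * (k : ℕ) * ζ)) →
        ∀ c : EuclideanSpace ℂ (Fin s),
          Real.sqrt ((⨅ i, hH.eigenvalues i) / 2) * ‖c‖ ≤
            ‖∑ j : Fin s, c j • (‖u ((j : ℕ) + 1)‖⁻¹ • u ((j : ℕ) + 1))‖ := by
  have : Nonempty (Fin s) := ⟨⟨0, hs⟩⟩
  set lam := ⨅ i, hH.eigenvalues i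
  have hlam_le (i : Fin s) : lam ≤ hH.eigenvalues i := ciInf_le (Finite.bddBelow_range _) i
  have hlam_pos : 0 < lam := by
    obtain ⟨i, hi⟩ := exists_eq_ciInf_of_finite (f := hH.eigenvalues)
    exact ((normHilbert_posDef s).eigenvalues_pos i).trans_eq hi
  refine ⟨Real.sqrt_pos.2 (half_pos hlam_pos), ?_⟩
  obtain ⟨C, hC⟩ := eventually_atTop.1 <| eventually_mul_dotProduct_self_le_of_tendsto
    (tendsto_gram_monomialMatrix s) hH hlam_le (half_lt_self hlam_pos)
  refine ⟨C, fun ζ _ N hN u hu c => ?_⟩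
  have key := mul_sum_norm_sq_le_sum_norm_sq_of_real (hC N hN) fun j => c j * I ^ (j : ℕ)
  simp only [norm_mul, norm_pow, norm_I, one_pow, mul_one, ← EuclideanSpace.norm_sq_eq,
    ← norm_sq_sum_normalized_eq hu c] at key
  rw [← Real.sqrt_sq (norm_nonneg c), ← Real.sqrt_mul (half_pos hlam_pos).le,
    ← Real.sqrt_sq (norm_nonneg (∑ j : Fin s, _))]
  exact Real.sqrt_le_sqrt key
end

section
/- (Micchelli) Let y₁,…,y_s be distinct real numbers, let D^{2m} ∈ ℝ^{s×s} have entries (y_i − y_j)^{2m}, and let P_{m-1} ∈ ℝ^{m×s} be the Vandermonde matrix (y_j^k)_{k=0,…,m-1; j=1,…,s}. Then for every 0 ≤ m ≤ s−1 and every a ∈ ker P_{m-1}: (−1)^m a^T D^{2m} a ≥ 0, with equality if and only if a ∈ ker P_m. -/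
open Matrix

/-!
Expanding `(y i - y j) ^ n` binomially writes `aᵀ D^n a` as
`∑ k, (-1) ^ (k + n) * n.choose k * c k * c (n - k)` in the moments `c k = ∑ i, a i * y i ^ k`.
For `a ∈ ker P_{m-1}` all moments below `m` vanish, so for `n = 2m` only the term `k = m`
survives: `(-1) ^ m * aᵀ D^{2m} a = (2m).choose m * c m ^ 2`, which is nonnegative and vanishes
exactly when also `c m = 0`, i.e. when `a ∈ ker P_m`.
-/

open Finset

section
variable {ι R : Type*} [Fintype ι] [CommRing R]

theorem dotProduct_mulVec_of_sub_pow (y a : ι → R) (n : ℕ) :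
    a ⬝ᵥ (of fun i j => (y i - y j) ^ n) *ᵥ a =
      ∑ k ∈ range (n + 1), (-1) ^ (k + n) * n.choose k * (y ^ k ⬝ᵥ a) * (y ^ (n - k) ⬝ᵥ a) := by
  simp only [dotProduct, mulVec, of_apply, Pi.pow_apply, sub_pow, mul_sum, sum_mul]
  rw [sum_comm]
  conv_lhs => enter [2, j]; rw [sum_comm]
  rw [sum_comm]
  exact sum_congr rfl fun k _ => sum_congr rfl fun j _ => sum_congr rfl fun i _ => by ring

theorem dotProduct_mulVec_of_sub_pow_two_mul {y a : ι → R} {m : ℕ}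
    (h : ∀ k < m, y ^ k ⬝ᵥ a = 0) :
    a ⬝ᵥ (of fun i j => (y i - y j) ^ (2 * m)) *ᵥ a =
      (-1) ^ m * (2 * m).choose m * (y ^ m ⬝ᵥ a) ^ 2 := by
  rw [dotProduct_mulVec_of_sub_pow, sum_eq_single_of_mem m (mem_range.2 (by omega))]
  · rw [show 2 * m - m = m by omega, pow_add, pow_mul, neg_one_sq, one_pow, mul_one, sq, mul_assoc]
  · intro k hk hkm
    rcases hkm.lt_or_gt with hlt | hgt
    · simp [h k hlt]
    · rw [mem_range] at hk
      simp [h (2 * m - k) (by omega)]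

theorem mulVec_of_pow_eq_zero_iff {n : ℕ} (y a : ι → R) :
    (of fun (k : Fin n) j => y j ^ (k : ℕ)) *ᵥ a = 0 ↔ ∀ k < n, y ^ k ⬝ᵥ a = 0 := by
  rw [funext_iff, Fin.forall_iff]
  rfl

end

theorem micchelli_lemma_general (s : ℕ) (y : Fin s → ℝ) (m : ℕ)
    (D2m : Matrix (Fin s) (Fin s) ℝ)
    (hD : ∀ i j, D2m i j = (y i - y j) ^ (2 * m))
    (P : Matrix (Fin m) (Fin s) ℝ) (hP : ∀ (k : Fin m) (j : Fin s), P k j = y j ^ (k : ℕ))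
    (P' : Matrix (Fin (m + 1)) (Fin s) ℝ)
    (hP' : ∀ (k : Fin (m + 1)) (j : Fin s), P' k j = y j ^ (k : ℕ))
    (a : Fin s → ℝ) (ha : P.mulVec a = 0) :
    0 ≤ (-1 : ℝ) ^ m * (a ⬝ᵥ D2m.mulVec a) ∧
    ((-1 : ℝ) ^ m * (a ⬝ᵥ D2m.mulVec a) = 0 ↔ P'.mulVec a = 0) := by
  obtain rfl : D2m = of fun i j => (y i - y j) ^ (2 * m) := Matrix.ext hD
  obtain rfl : P = of fun (k : Fin m) j => y j ^ (k : ℕ) := Matrix.ext hP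
  obtain rfl : P' = of fun (k : Fin (m + 1)) j => y j ^ (k : ℕ) := Matrix.ext hP'
  have hlow := (mulVec_of_pow_eq_zero_iff y a).1 ha
  have hform : (-1 : ℝ) ^ m * (a ⬝ᵥ (of fun i j => (y i - y j) ^ (2 * m)) *ᵥ a) =
      (2 * m).choose m * (y ^ m ⬝ᵥ a) ^ 2 := by
    rw [dotProduct_mulVec_of_sub_pow_two_mul hlow, ← mul_assoc, ← mul_assoc, ← pow_add,
      ← two_mul, pow_mul, neg_one_sq, one_pow, one_mul]
  have hchoose : (0 : ℝ) < (2 * m).choose m := mod_cast Nat.choose_pos (by omega)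
  rw [hform, mulVec_of_pow_eq_zero_iff, Nat.forall_lt_succ_right, and_iff_right hlow]
  exact ⟨by positivity, by simp [hchoose.ne']⟩

theorem micchelli_lemma (s : ℕ) (hs : 1 ≤ s) (y : Fin s → ℝ)
    (hy : Function.Injective y) (m : ℕ) (hm : m ≤ s - 1)
    (D2m : Matrix (Fin s) (Fin s) ℝ)
    (hD : ∀ i j, D2m i j = (y i - y j) ^ (2 * m))
    (P : Matrix (Fin m) (Fin s) ℝ) (hP : ∀ (k : Fin m) (j : Fin s), P k j = y j ^ (k : ℕ))
    (P' : Matrix (Fin (m + 1)) (Fin s) ℝ)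
    (hP' : ∀ (k : Fin (m + 1)) (j : Fin s), P' k j = y j ^ (k : ℕ))
    (a : Fin s → ℝ) (ha : P.mulVec a = 0) :
    0 ≤ (-1 : ℝ) ^ m * (a ⬝ᵥ D2m.mulVec a) ∧
    ((-1 : ℝ) ^ m * (a ⬝ᵥ D2m.mulVec a) = 0 ↔ P'.mulVec a = 0) :=
  micchelli_lemma_general s y m D2m hD P hP P' hP' a ha
end

section
/- Let y₁,…,y_s be distinct real numbers, 0 ≤ m ≤ s−1, D^{2m} the matrix with entries (y_i − y_j)^{2m}, and P_k the (k+1)×s Vandermonde matrix (y_j^i)_{i=0,…,k; j=1,…,s}. Then for every a ∈ ker P_{m-1} and every b ∈ ker P_m, a^T D^{2m} b = 0. -/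
/-!
Expanding `(yᵢ - yⱼ)^(2m)` binomially writes `aᵀ D^{2m} b` as a combination of the products
`(∑ᵢ aᵢ yᵢ^k) (∑ⱼ bⱼ yⱼ^(2m-k))`, `0 ≤ k ≤ 2m`. The first factor vanishes for `k < m`, the second
for `k ≥ m`, so every term is zero; no positivity argument is needed.
-/

open Matrix Finset

section PowerMoments

variable {R ι : Type*} [CommRing R] [Fintype ι]

theorem dotProduct_mulVec_sub_pow (y a b : ι → R) (n : ℕ) :
    a ⬝ᵥ (of fun i j => (y i - y j) ^ n) *ᵥ b =
      ∑ k ∈ range (n + 1), (-1) ^ (k + n) * n.choose k * (a ⬝ᵥ y ^ k) * (b ⬝ᵥ y ^ (n - k)) := by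
  simp only [dotProduct, mulVec, of_apply, sub_pow, Pi.pow_apply, mul_sum, sum_mul]
  refine (Finset.sum_congr rfl fun i _ => Finset.sum_comm).trans ?_
  rw [Finset.sum_comm]
  refine Finset.sum_congr rfl fun k _ => ?_
  rw [Finset.sum_comm]
  refine Finset.sum_congr rfl fun j _ => Finset.sum_congr rfl fun i _ => ?_
  ring

theorem dotProduct_mulVec_sub_pow_eq_zero {y a b : ι → R} {p q n : ℕ}
    (ha : ∀ k < p, a ⬝ᵥ y ^ k = 0) (hb : ∀ k < q, b ⬝ᵥ y ^ k = 0) (hn : n < p + q) :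
    a ⬝ᵥ (of fun i j => (y i - y j) ^ n) *ᵥ b = 0 := by
  rw [dotProduct_mulVec_sub_pow]
  refine sum_eq_zero fun k hk => ?_
  rcases lt_or_ge k p with hkp | hkp
  · simp [ha k hkp]
  · have hnk : n - k < q := by rw [mem_range] at hk; omega
    simp [hb _ hnk]

theorem dotProduct_pow_eq_zero_of_mulVec_eq_zero {m : ℕ} {y a : ι → R}
    {P : Matrix (Fin m) ι R} (hP : ∀ (k : Fin m) j, P k j = y j ^ (k : ℕ))
    (ha : P *ᵥ a = 0) {k : ℕ} (hk : k < m) : a ⬝ᵥ y ^ k = 0 := by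
  have := congrFun ha ⟨k, hk⟩
  rwa [mulVec, dotProduct_comm, show P ⟨k, hk⟩ = y ^ k from funext (hP ⟨k, hk⟩)] at this

end PowerMoments

theorem micchelli_orthogonality_general (s : ℕ) (y : Fin s → ℝ)
    (m : ℕ)
    (D2m : Matrix (Fin s) (Fin s) ℝ)
    (hD : ∀ i j, D2m i j = (y i - y j) ^ (2 * m))
    (P : Matrix (Fin m) (Fin s) ℝ) (hP : ∀ (k : Fin m) (j : Fin s), P k j = y j ^ (k : ℕ))
    (P' : Matrix (Fin (m + 1)) (Fin s) ℝ)
    (hP' : ∀ (k : Fin (m + 1)) (j : Fin s), P' k j = y j ^ (k : ℕ))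
    (a b : Fin s → ℝ) (ha : P.mulVec a = 0) (hb : P'.mulVec b = 0) :
    a ⬝ᵥ D2m.mulVec b = 0 := by
  obtain rfl : D2m = of fun i j => (y i - y j) ^ (2 * m) := ext hD
  exact dotProduct_mulVec_sub_pow_eq_zero
    (fun _ => dotProduct_pow_eq_zero_of_mulVec_eq_zero hP ha)
    (fun _ => dotProduct_pow_eq_zero_of_mulVec_eq_zero hP' hb) (by omega)

theorem micchelli_orthogonality (s : ℕ) (hs : 1 ≤ s) (y : Fin s → ℝ)
    (hy : Function.Injective y) (m : ℕ) (hm : m ≤ s - 1)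
    (D2m : Matrix (Fin s) (Fin s) ℝ)
    (hD : ∀ i j, D2m i j = (y i - y j) ^ (2 * m))
    (P : Matrix (Fin m) (Fin s) ℝ) (hP : ∀ (k : Fin m) (j : Fin s), P k j = y j ^ (k : ℕ))
    (P' : Matrix (Fin (m + 1)) (Fin s) ℝ)
    (hP' : ∀ (k : Fin (m + 1)) (j : Fin s), P' k j = y j ^ (k : ℕ))
    (a b : Fin s → ℝ) (ha : P.mulVec a = 0) (hb : P'.mulVec b = 0) :
    a ⬝ᵥ D2m.mulVec b = 0 :=
  micchelli_orthogonality_general s y m D2m hD P hP P' hP' a b ha hb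
end

section
/- Let G_N = (1/(2M)) [D_M(x_i − x_j)]_{i,j=1}^s where D_M(t) = ∑_{k=-M}^M e^{ikt} is the Dirichlet kernel, and suppose the nodes x₁,…,x_s lie in an interval of length h with ε := Mh < 1. Write x_j = h y_j and let P_{m-1} be the (real) Vandermonde matrix on y₁,…,y_s of degree m−1. Then for every 0 ≤ m ≤ s−1, the (m+1)-st largest eigenvalue of G_N satisfies λ_{m+1}(G_N) ≤ s e ε^{2m}. -/
open Matrix Complex Finset

open ComplexConjugate

theorem single_cluster_eigenvalue_upper_bound
    (M s : ℕ) (hM : 1 ≤ M) (hs : 1 ≤ s) (m : ℕ) (hm : m ≤ s - 1)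
    (x : Fin s → ℝ) (h : ℝ) (hh : ∀ i j : Fin s, |x i - x j| ≤ h)
    (hε : (M : ℝ) * h < 1)
    (G : Matrix (Fin s) (Fin s) ℂ)
    (hGdef : ∀ i j : Fin s, G i j = (1 / (2 * (M : ℂ))) *
      ∑ k ∈ Finset.Icc (-(M : ℤ)) (M : ℤ),
        Complex.exp (Complex.I * (k : ℤ) * ((x i : ℝ) - x j)))
    (hG : G.IsHermitian) :
    -- the `(m+1)`-st largest eigenvalue of `G` is at most `s·e·ε^{2m}`, `ε = Mh`
    (hG.eigenvalues ∘ Tuple.sort hG.eigenvalues) (Fin.rev ⟨m, by omega⟩) ≤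
      (s : ℝ) * Real.exp 1 * ((M : ℝ) * h) ^ (2 * m) := by
  classical
  have hsm : m < s := by omega
  have hms : m + 1 ≤ s := by omega
  suffices H : (hG.eigenvalues ∘ Tuple.sort hG.eigenvalues) (Fin.rev ⟨m, hsm⟩) ≤
      (s : ℝ) * Real.exp 1 * ((M : ℝ) * h) ^ (2 * m) by exact H
  have hh0 : 0 ≤ h := by simpa using hh ⟨0, by omega⟩ ⟨0, by omega⟩
  set ε := (M : ℝ) * h with hεdef
  have hε0 : 0 ≤ ε := mul_nonneg (by positivity) hh0
  have hε1 : ε ≤ 1 := le_of_lt hε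
  set v := hG.eigenvectorBasis with hvdef
  set σ := Tuple.sort hG.eigenvalues with hσdef
  set p : Fin (m + 1) → Fin s := fun t => σ ((Fin.castLE hms t).rev) with hpdef
  have hpinj : Function.Injective p := by
    intro t t' htt
    exact Fin.castLE_injective _ (Fin.rev_injective (σ.injective htt))
  set lam : ℝ := (hG.eigenvalues ∘ σ) (Fin.rev ⟨m, hsm⟩) with hlamdef
  have hlam_le : ∀ t : Fin (m + 1), lam ≤ hG.eigenvalues (p t) := by
    intro t
    have hmono := Tuple.monotone_sort hG.eigenvalues
    have hle : (Fin.rev (⟨m, hsm⟩ : Fin s)) ≤ (Fin.castLE hms t).rev := by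
      have ht := t.2
      simp only [Fin.le_def, Fin.rev, Fin.castLE]
      omega
    exact hmono hle
  -- reference point and moments
  set u : Fin s → ℝ := fun j => x j - x ⟨0, by omega⟩ with hudef
  have hu : ∀ j, |u j| ≤ h := fun j => hh _ _
  set Φ : Matrix (Fin m) (Fin (m + 1)) ℂ :=
    fun r t => ∑ j, (v (p t) j) * ((u j : ℝ) : ℂ) ^ (r : ℕ) with hΦdef
  obtain ⟨c, hcmem, hc0⟩ : ∃ c, c ∈ LinearMap.ker Φ.mulVecLin ∧ c ≠ 0 := by
    apply Submodule.exists_mem_ne_zero_of_ne_bot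
    intro hbot
    have hinj : Function.Injective Φ.mulVecLin := LinearMap.ker_eq_bot.mp hbot
    have hle := LinearMap.finrank_le_finrank_of_injective hinj
    simp only [Module.finrank_pi, Fintype.card_fin] at hle
    omega
  have hΦc : ∀ r : Fin m, ∑ t, Φ r t * c t = 0 := by
    intro r
    have h1 : Φ.mulVec c = 0 := hcmem
    have h2 := congrFun h1 r
    simpa [Matrix.mulVec, dotProduct] using h2
  set a : Fin s → ℂ := fun j => ∑ t, c t * v (p t) j with hadef
  set N : ℝ := ∑ t, Complex.normSq (c t) with hNdef
  have hNpos : 0 < N := by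
    obtain ⟨t0, ht0⟩ : ∃ t, c t ≠ 0 := by
      by_contra hno; push_neg at hno; exact hc0 (funext hno)
    exact Finset.sum_pos' (fun t _ => Complex.normSq_nonneg _)
      ⟨t0, Finset.mem_univ _, Complex.normSq_pos.mpr ht0⟩
  have hortho : ∀ t t' : Fin (m + 1),
      (∑ i, conj (v (p t) i) * v (p t') i) = if t = t' then 1 else 0 := by
    intro t t'
    have hON : Orthonormal ℂ (fun t => v (p t)) := (v.orthonormal).comp p hpinj
    have h1 := orthonormal_iff_ite.mp hON t t'
    simpa [PiLp.inner_apply, RCLike.inner_apply, mul_comm] using h1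
  have hcoef : ∀ t : Fin (m + 1), (∑ i, conj (a i) * v (p t) i) = conj (c t) := by
    intro t
    calc ∑ i, conj (a i) * v (p t) i
        = ∑ i, ∑ t', conj (c t') * (conj (v (p t') i) * v (p t) i) := by
          refine sum_congr rfl fun i _ => ?_
          simp only [hadef, map_sum, _root_.map_mul]
          rw [Finset.sum_mul]
          exact sum_congr rfl fun t' _ => by ring
      _ = ∑ t', conj (c t') * ∑ i, conj (v (p t') i) * v (p t) i := by
          rw [Finset.sum_comm]
          exact sum_congr rfl fun t' _ => (Finset.mul_sum _ _ _).symm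
      _ = conj (c t) := by
          simp only [hortho]
          simp
  have hdouble : ∀ w : Fin (m + 1) → ℂ,
      (∑ i, conj (a i) * (∑ t, w t * v (p t) i)) = ∑ t, w t * conj (c t) := by
    intro w
    calc ∑ i, conj (a i) * (∑ t, w t * v (p t) i)
        = ∑ i, ∑ t, w t * (conj (a i) * v (p t) i) := by
          refine sum_congr rfl fun i _ => ?_
          rw [Finset.mul_sum]
          exact sum_congr rfl fun t _ => by ring
      _ = ∑ t, w t * ∑ i, conj (a i) * v (p t) i := by
          rw [Finset.sum_comm]
          exact sum_congr rfl fun t _ => (Finset.mul_sum _ _ _).symm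
      _ = ∑ t, w t * conj (c t) := sum_congr rfl fun t _ => by rw [hcoef]
  have hNa : (∑ i, conj (a i) * a i) = (N : ℂ) := by
    have h2 : (∑ i, conj (a i) * a i) = ∑ i, conj (a i) * (∑ t, c t * v (p t) i) := by
      simp only [hadef]
    rw [h2, hdouble c, hNdef, Complex.ofReal_sum]
    exact sum_congr rfl fun t _ => Complex.mul_conj (c t)
  have hnormsq : (∑ i, ‖a i‖ ^ 2) = N := by
    have h1 : ((∑ i, ‖a i‖ ^ 2 : ℝ) : ℂ) = ((N : ℝ) : ℂ) := by
      rw [Complex.ofReal_sum, ← hNa]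
      refine sum_congr rfl fun i _ => ?_
      rw [mul_comm, Complex.mul_conj']
      norm_cast
    exact_mod_cast h1
  have hS : (∑ i, ∑ j, ‖a i‖ * ‖a j‖) ≤ s * N := by
    have h1 : (∑ i, ∑ j, ‖a i‖ * ‖a j‖) = (∑ i, ‖a i‖) ^ 2 := by
      rw [sq, Finset.sum_mul_sum]
    rw [h1]
    calc (∑ i, ‖a i‖) ^ 2 ≤ ((Finset.univ : Finset (Fin s)).card : ℝ) * ∑ i, ‖a i‖ ^ 2 :=
          sq_sum_le_card_mul_sum_sq
      _ = s * N := by rw [hnormsq, Finset.card_univ, Fintype.card_fin]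
  -- moments of a vanish
  have hmomC : ∀ r : ℕ, r < m → (∑ j, a j * ((u j : ℝ) : ℂ) ^ r) = 0 := by
    intro r hr
    have h1 : (∑ j, a j * ((u j : ℝ) : ℂ) ^ r) = ∑ t, Φ ⟨r, hr⟩ t * c t := by
      simp only [hadef, hΦdef, Finset.sum_mul, Finset.mul_sum]
      rw [Finset.sum_comm]
      exact sum_congr rfl fun t _ => sum_congr rfl fun j _ => by ring
    rw [h1, hΦc]
  have hmomCc : ∀ r : ℕ, r < m → (∑ j, conj (a j) * ((u j : ℝ) : ℂ) ^ r) = 0 := by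
    intro r hr
    have h1 := congrArg conj (hmomC r hr)
    simpa [map_sum, _root_.map_mul, map_pow, Complex.conj_ofReal] using h1
  -- the quadratic form
  set Q : ℂ := ∑ i, ∑ j, conj (a i) * a j * G i j with hQdef
  have hmv : ∀ t : Fin (m + 1), ∀ i,
      (∑ j, G i j * v (p t) j) = ((hG.eigenvalues (p t) : ℝ) : ℂ) * v (p t) i := by
    intro t i
    have h1 := hG.mulVec_eigenvectorBasis (p t)
    have h2 := congrFun h1 i
    simpa [Matrix.mulVec, dotProduct, Complex.real_smul] using h2
  have hQeq : Q = ∑ t, ((hG.eigenvalues (p t) : ℝ) : ℂ) * ((Complex.normSq (c t) : ℝ) : ℂ) := by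
    calc Q = ∑ i, conj (a i) * (∑ j, G i j * a j) := by
          rw [hQdef]
          refine sum_congr rfl fun i _ => ?_
          rw [Finset.mul_sum]
          exact sum_congr rfl fun j _ => by ring
      _ = ∑ i, conj (a i) *
            (∑ t, (c t * ((hG.eigenvalues (p t) : ℝ) : ℂ)) * v (p t) i) := by
          refine sum_congr rfl fun i _ => ?_
          congr 1
          calc ∑ j, G i j * a j = ∑ j, ∑ t, c t * (G i j * v (p t) j) := by
                refine sum_congr rfl fun j _ => ?_
                simp only [hadef]
                rw [Finset.mul_sum]
                exact sum_congr rfl fun t _ => by ring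
            _ = ∑ t, c t * ∑ j, G i j * v (p t) j := by
                rw [Finset.sum_comm]
                exact sum_congr rfl fun t _ => (Finset.mul_sum _ _ _).symm
            _ = ∑ t, (c t * ((hG.eigenvalues (p t) : ℝ) : ℂ)) * v (p t) i := by
                refine sum_congr rfl fun t _ => ?_
                rw [hmv t i]
                ring
      _ = ∑ t, (c t * ((hG.eigenvalues (p t) : ℝ) : ℂ)) * conj (c t) :=
          hdouble _
      _ = ∑ t, ((hG.eigenvalues (p t) : ℝ) : ℂ) * ((Complex.normSq (c t) : ℝ) : ℂ) := by
          refine sum_congr rfl fun t _ => ?_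
          rw [← Complex.mul_conj (c t)]
          ring
  have hlamN : lam * N ≤ Q.re := by
    have h2 : Q.re = ∑ t, hG.eigenvalues (p t) * Complex.normSq (c t) := by
      rw [hQeq, Complex.re_sum]
      refine sum_congr rfl fun t _ => ?_
      rw [← Complex.ofReal_mul, Complex.ofReal_re]
    rw [h2]
    calc lam * N = ∑ t, lam * Complex.normSq (c t) := by rw [hNdef, Finset.mul_sum]
      _ ≤ ∑ t, hG.eigenvalues (p t) * Complex.normSq (c t) :=
          sum_le_sum fun t _ => mul_le_mul_of_nonneg_right (hlam_le t) (Complex.normSq_nonneg _)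
  have hmain : ‖Q‖ ≤ (s : ℝ) * Real.exp 1 * ε ^ (2 * m) * N := by
    have hexpnorm : ∀ (i j : Fin s) (k : ℤ),
        ‖Complex.exp (Complex.I * (k : ℂ) * ((x i : ℂ) - (x j : ℂ)))‖ = 1 := by
      intro i j k
      rw [Complex.norm_exp]
      have hre : (Complex.I * (k : ℂ) * ((x i : ℂ) - (x j : ℂ))).re = 0 := by
        simp [Complex.mul_re, Complex.mul_im]
      rw [hre, Real.exp_zero]
    have hcard : (Finset.Icc (-(M : ℤ)) (M : ℤ)).card = 2 * M + 1 := by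
      rw [Int.card_Icc]; omega
    have hsN : (0 : ℝ) ≤ (s : ℝ) * N := mul_nonneg (Nat.cast_nonneg s) hNpos.le
    rcases Nat.eq_zero_or_pos m with hm0 | hm1
    · -- m = 0 : direct bound
      subst hm0
      have hGn : ∀ i j : Fin s, ‖G i j‖ ≤ Real.exp 1 := by
        intro i j
        rw [hGdef i j, norm_mul]
        have h1 : ‖(1 / (2 * (M : ℂ)))‖ = 1 / (2 * (M : ℝ)) := by
          rw [norm_div, norm_one, norm_mul, Complex.norm_natCast]
          norm_num
        have h2 : ‖∑ k ∈ Finset.Icc (-(M : ℤ)) (M : ℤ),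
            Complex.exp (Complex.I * (k : ℂ) * ((x i : ℂ) - (x j : ℂ)))‖ ≤ 2 * (M : ℝ) + 1 := by
          calc ‖∑ k ∈ Finset.Icc (-(M : ℤ)) (M : ℤ),
              Complex.exp (Complex.I * (k : ℂ) * ((x i : ℂ) - (x j : ℂ)))‖
              ≤ ∑ k ∈ Finset.Icc (-(M : ℤ)) (M : ℤ),
                ‖Complex.exp (Complex.I * (k : ℂ) * ((x i : ℂ) - (x j : ℂ)))‖ := norm_sum_le _ _
            _ = ∑ _k ∈ Finset.Icc (-(M : ℤ)) (M : ℤ), (1 : ℝ) :=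
                sum_congr rfl fun k _ => hexpnorm i j k
            _ = 2 * (M : ℝ) + 1 := by
                rw [Finset.sum_const, hcard, nsmul_eq_mul]; push_cast; ring
        have hM1 : (1 : ℝ) ≤ (M : ℝ) := by exact_mod_cast hM
        have he2 : (2 : ℝ) ≤ Real.exp 1 := by
          have := Real.add_one_le_exp 1; linarith
        calc ‖(1 / (2 * (M : ℂ)))‖ * ‖∑ k ∈ Finset.Icc (-(M : ℤ)) (M : ℤ),
              Complex.exp (Complex.I * (k : ℂ) * ((x i : ℂ) - (x j : ℂ)))‖
            ≤ (1 / (2 * (M : ℝ))) * (2 * (M : ℝ) + 1) := by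
              rw [h1]
              exact mul_le_mul_of_nonneg_left h2 (by positivity)
          _ ≤ 2 := by
              rw [div_mul_eq_mul_div, div_le_iff₀ (by linarith)]
              nlinarith
          _ ≤ Real.exp 1 := he2
      calc ‖Q‖ ≤ ∑ i, ∑ j, ‖a i‖ * ‖a j‖ * Real.exp 1 := by
            rw [hQdef]
            refine le_trans (norm_sum_le _ _) (le_trans (sum_le_sum fun i _ => norm_sum_le _ _) ?_)
            refine sum_le_sum fun i _ => sum_le_sum fun j _ => ?_
            rw [norm_mul, norm_mul, RCLike.norm_conj]
            exact mul_le_mul_of_nonneg_left (hGn i j) (by positivity)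
        _ = (∑ i, ∑ j, ‖a i‖ * ‖a j‖) * Real.exp 1 := by
            rw [Finset.sum_mul]
            exact sum_congr rfl fun i _ => (Finset.sum_mul _ _ _).symm
        _ ≤ ((s : ℝ) * N) * Real.exp 1 := mul_le_mul_of_nonneg_right hS (Real.exp_nonneg 1)
        _ = (s : ℝ) * Real.exp 1 * ε ^ (2 * 0) * N := by
            rw [Nat.mul_zero, pow_zero, mul_one]
            ring
    · -- 1 ≤ m : power series expansion
      have hexp : ∀ w : ℂ, Complex.exp w = ∑' n : ℕ, w ^ n / (n.factorial : ℂ) := fun w => by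
        rw [Complex.exp_eq_exp_ℂ, NormedSpace.exp_eq_tsum_div]
      set F : Fin s → Fin s → ℤ → ℕ → ℂ := fun i j k n =>
        (conj (a i) * a j * (1 / (2 * (M : ℂ)))) *
          ((Complex.I * (k : ℂ) * ((x i : ℂ) - (x j : ℂ))) ^ n / (n.factorial : ℂ)) with hFdef
      set T : ℕ → ℂ := fun n => ∑ i, ∑ j, ∑ k ∈ Finset.Icc (-(M : ℤ)) (M : ℤ), F i j k n
        with hTdef
      have hsummZ : ∀ (i j : Fin s) (k : ℤ), Summable (fun n => F i j k n) := by
        intro i j k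
        simp only [hFdef]
        exact (NormedSpace.expSeries_div_summable (𝔸 := ℂ) _).mul_left _
      have hQT : Q = ∑' n, T n := by
        have h1 : ∀ i j : Fin s, conj (a i) * a j * G i j
            = ∑ k ∈ Finset.Icc (-(M : ℤ)) (M : ℤ), ∑' n : ℕ, F i j k n := by
          intro i j
          rw [hGdef i j, ← mul_assoc, Finset.mul_sum]
          refine sum_congr rfl fun k _ => ?_
          rw [hexp (Complex.I * (k : ℂ) * ((x i : ℂ) - (x j : ℂ))), ← tsum_mul_left]
        calc Q = ∑ i, ∑ j, ∑ k ∈ Finset.Icc (-(M : ℤ)) (M : ℤ), ∑' n : ℕ, F i j k n := by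
              rw [hQdef]
              exact sum_congr rfl fun i _ => sum_congr rfl fun j _ => h1 i j
          _ = ∑ i, ∑ j, ∑' n : ℕ, ∑ k ∈ Finset.Icc (-(M : ℤ)) (M : ℤ), F i j k n := by
              refine sum_congr rfl fun i _ => sum_congr rfl fun j _ => ?_
              exact (Summable.tsum_finsetSum fun k _ => hsummZ i j k).symm
          _ = ∑ i, ∑' n : ℕ, ∑ j, ∑ k ∈ Finset.Icc (-(M : ℤ)) (M : ℤ), F i j k n := by
              refine sum_congr rfl fun i _ => ?_
              exact (Summable.tsum_finsetSum fun j _ => summable_sum fun k _ => hsummZ i j k).symm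
          _ = ∑' n : ℕ, T n := by
              rw [hTdef]
              exact (Summable.tsum_finsetSum fun i _ => summable_sum fun j _ =>
                summable_sum fun k _ => hsummZ i j k).symm
      have hBzero : ∀ n : ℕ, n < 2 * m →
          (∑ i, ∑ j, conj (a i) * a j * ((x i : ℂ) - (x j : ℂ)) ^ n) = 0 := by
        intro n hn
        have hxu : ∀ i j : Fin s, ((x i : ℂ) - (x j : ℂ)) = ((u i : ℝ) : ℂ) - ((u j : ℝ) : ℂ) := by
          intro i j
          simp only [hudef]
          push_cast
          ring
        set E : Fin s → Fin s → ℕ → ℂ := fun i j t =>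
          ((-1 : ℂ) ^ (t + n) * (n.choose t : ℂ)) *
            ((conj (a i) * ((u i : ℝ) : ℂ) ^ t) * (a j * ((u j : ℝ) : ℂ) ^ (n - t))) with hEdef
        have expand : ∀ i j : Fin s, conj (a i) * a j * ((x i : ℂ) - (x j : ℂ)) ^ n
            = ∑ t ∈ range (n + 1), E i j t := by
          intro i j
          rw [hxu i j, sub_pow, Finset.mul_sum]
          refine sum_congr rfl fun t _ => ?_
          simp only [hEdef]
          ring
        calc ∑ i, ∑ j, conj (a i) * a j * ((x i : ℂ) - (x j : ℂ)) ^ n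
            = ∑ i, ∑ j, ∑ t ∈ range (n + 1), E i j t :=
              sum_congr rfl fun i _ => sum_congr rfl fun j _ => expand i j
          _ = ∑ i, ∑ t ∈ range (n + 1), ∑ j, E i j t :=
              sum_congr rfl fun i _ => Finset.sum_comm
          _ = ∑ t ∈ range (n + 1), ∑ i, ∑ j, E i j t := Finset.sum_comm
          _ = ∑ t ∈ range (n + 1), ((-1 : ℂ) ^ (t + n) * (n.choose t : ℂ)) *
                ((∑ i, conj (a i) * ((u i : ℝ) : ℂ) ^ t) *
                  (∑ j, a j * ((u j : ℝ) : ℂ) ^ (n - t))) := by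
              refine sum_congr rfl fun t _ => ?_
              rw [Finset.sum_mul_sum, Finset.mul_sum]
              refine sum_congr rfl fun i _ => ?_
              rw [Finset.mul_sum]
          _ = 0 := by
              refine Finset.sum_eq_zero fun t ht => ?_
              have ht' := Finset.mem_range.mp ht
              rcases lt_or_ge t m with h1 | h1
              · rw [hmomCc t h1, zero_mul, mul_zero]
              · rw [hmomC (n - t) (by omega), mul_zero, mul_zero]
      have hTzero : ∀ n : ℕ, n < 2 * m → T n = 0 := by
        intro n hn
        have h2 : ∀ (i j : Fin s) (k : ℤ), F i j k n
            = ((1 / (2 * (M : ℂ))) * ((Complex.I * (k : ℂ)) ^ n / (n.factorial : ℂ))) *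
              (conj (a i) * a j * ((x i : ℂ) - (x j : ℂ)) ^ n) := by
          intro i j k
          simp only [hFdef]
          rw [mul_pow]
          ring
        calc T n = ∑ i, ∑ j, ∑ k ∈ Finset.Icc (-(M : ℤ)) (M : ℤ),
              ((1 / (2 * (M : ℂ))) * ((Complex.I * (k : ℂ)) ^ n / (n.factorial : ℂ))) *
                (conj (a i) * a j * ((x i : ℂ) - (x j : ℂ)) ^ n) := by
              rw [hTdef]
              exact sum_congr rfl fun i _ => sum_congr rfl fun j _ =>
                sum_congr rfl fun k _ => h2 i j k
          _ = ∑ i, ∑ k ∈ Finset.Icc (-(M : ℤ)) (M : ℤ), ∑ j,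
              ((1 / (2 * (M : ℂ))) * ((Complex.I * (k : ℂ)) ^ n / (n.factorial : ℂ))) *
                (conj (a i) * a j * ((x i : ℂ) - (x j : ℂ)) ^ n) :=
              sum_congr rfl fun i _ => Finset.sum_comm
          _ = ∑ k ∈ Finset.Icc (-(M : ℤ)) (M : ℤ), ∑ i, ∑ j,
              ((1 / (2 * (M : ℂ))) * ((Complex.I * (k : ℂ)) ^ n / (n.factorial : ℂ))) *
                (conj (a i) * a j * ((x i : ℂ) - (x j : ℂ)) ^ n) := Finset.sum_comm
          _ = ∑ k ∈ Finset.Icc (-(M : ℤ)) (M : ℤ),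
              ((1 / (2 * (M : ℂ))) * ((Complex.I * (k : ℂ)) ^ n / (n.factorial : ℂ))) *
                (∑ i, ∑ j, conj (a i) * a j * ((x i : ℂ) - (x j : ℂ)) ^ n) := by
              refine sum_congr rfl fun k _ => ?_
              rw [Finset.mul_sum]
              exact sum_congr rfl fun i _ => (Finset.mul_sum _ _ _).symm
          _ = 0 := by
              rw [hBzero n hn]
              simp
      have hsumk : ∀ n : ℕ, 1 ≤ n →
          (∑ k ∈ Finset.Icc (-(M : ℤ)) (M : ℤ), |((k : ℤ) : ℝ)| ^ n) ≤ 2 * (M : ℝ) * (M : ℝ) ^ n := by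
        intro n hn
        have h0 : (fun k : ℤ => |((k : ℤ) : ℝ)| ^ n) 0 = 0 := by
          simp only []
          push_cast
          rw [abs_zero]
          exact zero_pow (by omega)
        rw [← Finset.sum_erase (Finset.Icc (-(M : ℤ)) (M : ℤ))
          (f := fun k : ℤ => |((k : ℤ) : ℝ)| ^ n) (a := 0) h0]
        have h0mem : (0 : ℤ) ∈ Finset.Icc (-(M : ℤ)) (M : ℤ) := by
          simp only [Finset.mem_Icc]
          omega
        have hcarde : ((Finset.Icc (-(M : ℤ)) (M : ℤ)).erase 0).card = 2 * M := by
          rw [Finset.card_erase_of_mem h0mem, hcard]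
          omega
        calc ∑ k ∈ (Finset.Icc (-(M : ℤ)) (M : ℤ)).erase 0, |((k : ℤ) : ℝ)| ^ n
            ≤ ∑ _k ∈ (Finset.Icc (-(M : ℤ)) (M : ℤ)).erase 0, (M : ℝ) ^ n := by
              refine sum_le_sum fun k hk => ?_
              have hk2 := Finset.mem_Icc.mp (Finset.mem_of_mem_erase hk)
              refine pow_le_pow_left₀ (abs_nonneg _) ?_ n
              rw [abs_le]
              constructor
              · exact_mod_cast hk2.1
              · exact_mod_cast hk2.2
          _ = 2 * (M : ℝ) * (M : ℝ) ^ n := by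
              rw [Finset.sum_const, hcarde, nsmul_eq_mul]
              push_cast
              ring
      have hTall : ∀ n : ℕ, ‖T n‖ ≤ ((s : ℝ) * N) * (ε ^ n / (n.factorial : ℝ)) := by
        intro n
        rcases Nat.eq_zero_or_pos n with h0 | h1
        · subst h0
          rw [hTzero 0 (by omega), norm_zero]
          exact mul_nonneg hsN (div_nonneg (pow_nonneg hε0 _) (Nat.cast_nonneg _))
        · -- per-pair bound
          have hterm : ∀ i j : Fin s,
              ‖∑ k ∈ Finset.Icc (-(M : ℤ)) (M : ℤ), F i j k n‖
                ≤ ‖a i‖ * ‖a j‖ * (ε ^ n / (n.factorial : ℝ)) := by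
            intro i j
            have hknorm : ∀ k : ℤ, ‖F i j k n‖
                ≤ (‖a i‖ * ‖a j‖ * (1 / (2 * (M : ℝ)))) * (|((k : ℤ) : ℝ)| ^ n * h ^ n / (n.factorial : ℝ)) := by
              intro k
              have hz : ‖Complex.I * (k : ℂ) * ((x i : ℂ) - (x j : ℂ))‖ ≤ |((k : ℤ) : ℝ)| * h := by
                rw [norm_mul, norm_mul, Complex.norm_I, one_mul, Complex.norm_intCast]
                have hxx : ((x i : ℂ) - (x j : ℂ)) = ((x i - x j : ℝ) : ℂ) := by push_cast; ring
                rw [hxx, Complex.norm_real, Real.norm_eq_abs]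
                exact mul_le_mul_of_nonneg_left (hh i j) (abs_nonneg _)
              have hn1 : ‖(1 / (2 * (M : ℂ)))‖ = 1 / (2 * (M : ℝ)) := by
                rw [norm_div, norm_one, norm_mul, Complex.norm_natCast]
                norm_num
              have hzp : ‖Complex.I * (k : ℂ) * ((x i : ℂ) - (x j : ℂ))‖ ^ n
                  ≤ |((k : ℤ) : ℝ)| ^ n * h ^ n := by
                rw [← mul_pow]
                exact pow_le_pow_left₀ (norm_nonneg _) hz n
              have heq : ‖F i j k n‖ = (‖a i‖ * ‖a j‖ * (1 / (2 * (M : ℝ)))) *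
                  (‖Complex.I * (k : ℂ) * ((x i : ℂ) - (x j : ℂ))‖ ^ n / (n.factorial : ℝ)) := by
                simp only [hFdef, norm_mul, norm_div, norm_pow, RCLike.norm_conj,
                  Complex.norm_natCast, Complex.norm_ofNat, norm_one]
              rw [heq]
              refine mul_le_mul_of_nonneg_left ?_ (by positivity)
              refine (div_le_div_iff_of_pos_right (by positivity)).mpr hzp
            calc ‖∑ k ∈ Finset.Icc (-(M : ℤ)) (M : ℤ), F i j k n‖
                ≤ ∑ k ∈ Finset.Icc (-(M : ℤ)) (M : ℤ), ‖F i j k n‖ := norm_sum_le _ _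
              _ ≤ ∑ k ∈ Finset.Icc (-(M : ℤ)) (M : ℤ),
                  (‖a i‖ * ‖a j‖ * (1 / (2 * (M : ℝ)))) * (|((k : ℤ) : ℝ)| ^ n * h ^ n / (n.factorial : ℝ)) :=
                  sum_le_sum fun k _ => hknorm k
              _ = (‖a i‖ * ‖a j‖ * (1 / (2 * (M : ℝ))) * (h ^ n / (n.factorial : ℝ))) *
                  ∑ k ∈ Finset.Icc (-(M : ℤ)) (M : ℤ), |((k : ℤ) : ℝ)| ^ n := by
                  rw [Finset.mul_sum]
                  exact sum_congr rfl fun k _ => by ring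
              _ ≤ (‖a i‖ * ‖a j‖ * (1 / (2 * (M : ℝ))) * (h ^ n / (n.factorial : ℝ))) *
                  (2 * (M : ℝ) * (M : ℝ) ^ n) := by
                  refine mul_le_mul_of_nonneg_left (hsumk n h1) ?_
                  have : (0:ℝ) ≤ h ^ n := pow_nonneg hh0 n
                  positivity
              _ = ‖a i‖ * ‖a j‖ * (((M : ℝ) * h) ^ n / (n.factorial : ℝ)) * (2 * (M : ℝ) * (1 / (2 * (M : ℝ)))) := by
                  rw [mul_pow]
                  ring
              _ = ‖a i‖ * ‖a j‖ * (ε ^ n / (n.factorial : ℝ)) := by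
                  have hM0 : (M : ℝ) ≠ 0 := by
                    have : (1:ℝ) ≤ (M:ℝ) := by exact_mod_cast hM
                    linarith
                  rw [hεdef]
                  field_simp
          calc ‖T n‖ ≤ ∑ i, ∑ j, ‖∑ k ∈ Finset.Icc (-(M : ℤ)) (M : ℤ), F i j k n‖ := by
                rw [hTdef]
                exact le_trans (norm_sum_le _ _) (sum_le_sum fun i _ => norm_sum_le _ _)
            _ ≤ ∑ i, ∑ j, ‖a i‖ * ‖a j‖ * (ε ^ n / (n.factorial : ℝ)) :=
                sum_le_sum fun i _ => sum_le_sum fun j _ => hterm i j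
            _ = (∑ i, ∑ j, ‖a i‖ * ‖a j‖) * (ε ^ n / (n.factorial : ℝ)) := by
                rw [Finset.sum_mul]
                exact sum_congr rfl fun i _ => (Finset.sum_mul _ _ _).symm
            _ ≤ ((s : ℝ) * N) * (ε ^ n / (n.factorial : ℝ)) :=
                mul_le_mul_of_nonneg_right hS (div_nonneg (pow_nonneg hε0 _) (Nat.cast_nonneg _))
      have hsummable : Summable fun n => ‖T n‖ := by
        refine Summable.of_nonneg_of_le (fun n => norm_nonneg _) hTall ?_
        exact (Real.summable_pow_div_factorial ε).mul_left _
      have hshift : ∑' n : ℕ, ‖T n‖ = ∑' q : ℕ, ‖T (q + 2 * m)‖ := by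
        refine (Function.Injective.tsum_eq (add_left_injective (2 * m)) ?_).symm
        intro n hn
        simp only [Function.mem_support] at hn
        have hge : ¬ n < 2 * m := fun hlt => hn (by rw [hTzero n hlt, norm_zero])
        refine ⟨n - 2 * m, ?_⟩
        show n - 2 * m + 2 * m = n
        omega
      have hQnorm : ‖Q‖ ≤ (((s : ℝ) * N) * ε ^ (2 * m)) * Real.exp ε := by
        calc ‖Q‖ = ‖∑' n : ℕ, T n‖ := by rw [hQT]
          _ ≤ ∑' n : ℕ, ‖T n‖ := norm_tsum_le_tsum_norm hsummable
          _ = ∑' q : ℕ, ‖T (q + 2 * m)‖ := hshift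
          _ ≤ ∑' q : ℕ, (((s : ℝ) * N) * ε ^ (2 * m)) * (ε ^ q / (q.factorial : ℝ)) := by
              refine Summable.tsum_le_tsum ?_ (hsummable.comp_injective (add_left_injective (2 * m)))
                ((Real.summable_pow_div_factorial ε).mul_left _)
              intro q
              calc ‖T (q + 2 * m)‖ ≤ ((s : ℝ) * N) * (ε ^ (q + 2 * m) / ((q + 2 * m).factorial : ℝ)) :=
                    hTall _
                _ ≤ (((s : ℝ) * N) * ε ^ (2 * m)) * (ε ^ q / (q.factorial : ℝ)) := by
                    have hfac : ((q.factorial : ℕ) : ℝ) ≤ (((q + 2 * m).factorial : ℕ) : ℝ) :=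
                      Nat.cast_le.mpr (Nat.factorial_le (by omega))
                    have hnum : (0:ℝ) ≤ ε ^ q * ε ^ (2 * m) :=
                      mul_nonneg (pow_nonneg hε0 _) (pow_nonneg hε0 _)
                    have h1 : ε ^ (q + 2 * m) / (((q + 2 * m).factorial : ℕ) : ℝ)
                        ≤ ε ^ q * ε ^ (2 * m) / ((q.factorial : ℕ) : ℝ) := by
                      rw [pow_add]
                      exact div_le_div_of_nonneg_left hnum (by positivity) hfac
                    calc ((s : ℝ) * N) * (ε ^ (q + 2 * m) / ((q + 2 * m).factorial : ℝ))
                        ≤ ((s : ℝ) * N) * (ε ^ q * ε ^ (2 * m) / ((q.factorial : ℕ) : ℝ)) :=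
                          mul_le_mul_of_nonneg_left h1 hsN
                      _ = (((s : ℝ) * N) * ε ^ (2 * m)) * (ε ^ q / (q.factorial : ℝ)) := by ring
          _ = (((s : ℝ) * N) * ε ^ (2 * m)) * Real.exp ε := by
              rw [tsum_mul_left, Real.exp_eq_exp_ℝ, NormedSpace.exp_eq_tsum_div]
      calc ‖Q‖ ≤ (((s : ℝ) * N) * ε ^ (2 * m)) * Real.exp ε := hQnorm
        _ ≤ (((s : ℝ) * N) * ε ^ (2 * m)) * Real.exp 1 := by
            refine mul_le_mul_of_nonneg_left (Real.exp_le_exp.mpr hε1) ?_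
            exact mul_nonneg hsN (pow_nonneg hε0 _)
        _ = (s : ℝ) * Real.exp 1 * ε ^ (2 * m) * N := by ring
  have hQre : Q.re ≤ ‖Q‖ := by
    exact Complex.re_le_norm Q
  have hfin : lam * N ≤ ((s : ℝ) * Real.exp 1 * ε ^ (2 * m)) * N :=
    le_trans hlamN (le_trans hQre hmain)
  exact le_of_mul_le_mul_right hfin hNpos
end
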